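/- arXiv:2407.05011 — 7 statements merged into one kernel-verified Lean document; each statement's English description precedes it below -/
import Mathlib

section
/- Let C = [I,S] with I < S, let H be a real random variable whose CDF Φ satisfies ψ(x) ≤ Φ(x) ≤ φ(x) for all x ∈ [I,S], where φ, ψ : [I,S] → (0,1) are C¹ functions. Let X = Π_C(H), let X_1,…,X_N be i.i.d. copies of X, and set Î_N = min{X_1,…,X_N}, Ŝ_N = max{X_1,…,X_N}. Then N·max{S − Ŝ_N, Î_N − I} converges in probability to 0 as N → ∞. -/
open MeasureTheory ProbabilityTheory Filter

/-- Let `C = [I,S]` with `I < S`, `H` a real random variable whose CDF `Φ` satisfies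
`ψ ≤ Φ ≤ φ` on `[I,S]` with `φ, ψ : [I,S] → (0,1)` of class `C¹`. With `X = Π_C(H)`,
`X_1, X_2, …` i.i.d. copies of `X`, `Î_N = min{X_1,…,X_N}` and `Ŝ_N = max{X_1,…,X_N}`,
`N·max{S − Ŝ_N, Î_N − I}` converges in probability to `0`. -/
theorem stmt4 {Ω : Type*} [MeasurableSpace Ω] (P : Measure Ω) [IsProbabilityMeasure P]
    (I S : ℝ) (hIS : I < S) (H : Ω → ℝ) (hHm : Measurable H)
    (Φ φ ψ : ℝ → ℝ) (hΦ : ∀ x, Φ x = (P {ω | H ω ≤ x}).toReal)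
    (hφC1 : ContDiffOn ℝ 1 φ (Set.Icc I S)) (hψC1 : ContDiffOn ℝ 1 ψ (Set.Icc I S))
    (hφmem : ∀ x ∈ Set.Icc I S, φ x ∈ Set.Ioo (0:ℝ) 1)
    (hψmem : ∀ x ∈ Set.Icc I S, ψ x ∈ Set.Ioo (0:ℝ) 1)
    (hsandwich : ∀ x ∈ Set.Icc I S, ψ x ≤ Φ x ∧ Φ x ≤ φ x)
    (X : ℕ → Ω → ℝ) (hXm : ∀ k, Measurable (X k))
    (hindep : iIndepFun X P)
    (hident : ∀ k, IdentDistrib (X k) (fun ω => min (max (H ω) I) S) P P) :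
    ∀ ε > (0:ℝ),
      Tendsto
        (fun N : ℕ =>
          P {ω | ε < ((N:ℝ) + 1) * max
            (S - (Finset.range (N + 1)).sup' Finset.nonempty_range_add_one (fun k => X k ω))
            ((Finset.range (N + 1)).inf' Finset.nonempty_range_add_one (fun k => X k ω) - I)})
        atTop (nhds 0) := by
  intro ε hε
  set Y : Ω → ℝ := fun ω => min (max (H ω) I) S with hYdef
  have hSmem : S ∈ Set.Icc I S := ⟨hIS.le, le_rfl⟩
  have hImem : I ∈ Set.Icc I S := ⟨le_rfl, hIS.le⟩
  -- P {H ≤ S} < 1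
  have hHS : P {ω | H ω ≤ S} < 1 := by
    have h1 : Φ S < 1 := lt_of_le_of_lt (hsandwich S hSmem).2 (hφmem S hSmem).2
    rw [hΦ] at h1
    by_contra h
    push_neg at h
    have heq : P {ω | H ω ≤ S} = 1 := le_antisymm prob_le_one h
    rw [heq] at h1
    simp at h1
  -- p := P (Y ⁻¹' Iio S) < 1
  have hp : P (Y ⁻¹' Set.Iio S) < 1 := by
    refine lt_of_le_of_lt (measure_mono ?_) hHS
    intro ω hω
    simp only [Set.mem_preimage, Set.mem_Iio, hYdef] at hω
    rcases min_lt_iff.mp hω with h' | h'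
    · exact le_of_lt (max_lt_iff.mp h').1
    · exact absurd h' (lt_irrefl S)
  -- P {I < H} < 1
  have hHI : P {ω | I < H ω} < 1 := by
    have hpos : 0 < P {ω | H ω ≤ I} := by
      have h1 : 0 < Φ I := lt_of_lt_of_le (hψmem I hImem).1 (hsandwich I hImem).1
      rw [hΦ] at h1
      by_contra h
      push_neg at h
      have : P {ω | H ω ≤ I} = 0 := le_antisymm h zero_le
      rw [this] at h1
      simp at h1
    have hcompl : {ω | I < H ω} = {ω | H ω ≤ I}ᶜ := by
      ext ω; simp [not_le]
    rw [hcompl, measure_compl (measurableSet_le hHm measurable_const) (measure_ne_top P _)]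
    simp only [measure_univ]
    exact ENNReal.sub_lt_self ENNReal.one_ne_top one_ne_zero hpos.ne'
  have hq : P (Y ⁻¹' Set.Ioi I) < 1 := by
    refine lt_of_le_of_lt (measure_mono ?_) hHI
    intro ω hω
    simp only [Set.mem_preimage, Set.mem_Ioi, hYdef] at hω
    have h1 : I < max (H ω) I := (lt_min_iff.mp hω).1
    rcases lt_max_iff.mp h1 with h' | h'
    · exact h'
    · exact absurd h' (lt_irrefl I)
  -- the two null events
  have hYleS : ∀ ω, Y ω ≤ S := fun ω => min_le_right _ _
  have hYgeI : ∀ ω, I ≤ Y ω := fun ω => le_min (le_max_right _ _) hIS.le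
  have hCnull : ∀ k, P (X k ⁻¹' Set.Ioi S) = 0 := by
    intro k
    rw [(hident k).measure_mem_eq measurableSet_Ioi]
    have : Y ⁻¹' Set.Ioi S = ∅ := by
      ext ω; simp only [Set.mem_preimage, Set.mem_Ioi, Set.mem_empty_iff_false, iff_false, not_lt]
      exact hYleS ω
    rw [Set.preimage] at this ⊢
    rw [this, measure_empty]
  have hDnull : ∀ k, P (X k ⁻¹' Set.Iio I) = 0 := by
    intro k
    rw [(hident k).measure_mem_eq measurableSet_Iio]
    have : Y ⁻¹' Set.Iio I = ∅ := by
      ext ω; simp only [Set.mem_preimage, Set.mem_Iio, Set.mem_empty_iff_false, iff_false, not_lt]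
      exact hYgeI ω
    rw [Set.preimage] at this ⊢
    rw [this, measure_empty]
  set p := P (Y ⁻¹' Set.Iio S) with hpdef
  set q := P (Y ⁻¹' Set.Ioi I) with hqdef
  -- main bound
  have hbound : ∀ N : ℕ,
      P {ω | ε < ((N:ℝ) + 1) * max
        (S - (Finset.range (N + 1)).sup' Finset.nonempty_range_add_one (fun k => X k ω))
        ((Finset.range (N + 1)).inf' Finset.nonempty_range_add_one (fun k => X k ω) - I)}
      ≤ p ^ (N + 1) + q ^ (N + 1) := by
    intro N
    set A := ⋂ k ∈ Finset.range (N + 1), X k ⁻¹' Set.Iio S with hA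
    set B := ⋂ k ∈ Finset.range (N + 1), X k ⁻¹' Set.Ioi I with hB
    set C := ⋃ k ∈ Finset.range (N + 1), X k ⁻¹' Set.Ioi S with hC
    set D := ⋃ k ∈ Finset.range (N + 1), X k ⁻¹' Set.Iio I with hD
    have hsub : {ω | ε < ((N:ℝ) + 1) * max
        (S - (Finset.range (N + 1)).sup' Finset.nonempty_range_add_one (fun k => X k ω))
        ((Finset.range (N + 1)).inf' Finset.nonempty_range_add_one (fun k => X k ω) - I)}
        ⊆ (A ∪ B) ∪ (C ∪ D) := by
      intro ω hω
      simp only [Set.mem_setOf_eq] at hω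
      by_contra hmem
      simp only [Set.mem_union, not_or] at hmem
      obtain ⟨⟨hAmem, hBmem⟩, hCmem, hDmem⟩ := hmem
      have hle : ∀ k ∈ Finset.range (N + 1), X k ω ≤ S := by
        intro k hk
        by_contra h
        push_neg at h
        exact hCmem (Set.mem_biUnion hk h)
      have hge : ∀ k ∈ Finset.range (N + 1), I ≤ X k ω := by
        intro k hk
        by_contra h
        push_neg at h
        exact hDmem (Set.mem_biUnion hk h)
      have hexS : ∃ k ∈ Finset.range (N + 1), S ≤ X k ω := by
        by_contra h
        push_neg at h
        exact hAmem (Set.mem_biInter h)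
      have hexI : ∃ k ∈ Finset.range (N + 1), X k ω ≤ I := by
        by_contra h
        push_neg at h
        exact hBmem (Set.mem_biInter h)
      obtain ⟨k₁, hk₁, hk₁'⟩ := hexS
      obtain ⟨k₂, hk₂, hk₂'⟩ := hexI
      have hsup : (Finset.range (N + 1)).sup' Finset.nonempty_range_add_one (fun k => X k ω) = S :=
        le_antisymm (Finset.sup'_le _ _ hle)
          (le_trans hk₁' (Finset.le_sup' (f := fun k => X k ω) hk₁))
      have hinf : (Finset.range (N + 1)).inf' Finset.nonempty_range_add_one (fun k => X k ω) = I :=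
        le_antisymm (le_trans (Finset.inf'_le (f := fun k => X k ω) hk₂) hk₂')
          (Finset.le_inf' _ _ hge)
      rw [hsup, hinf] at hω
      simp only [sub_self, max_self, mul_zero] at hω
      exact absurd hω (not_lt.mpr hε.le)
    have hPA : P A = p ^ (N + 1) := by
      rw [hA, hindep.measure_inter_preimage_eq_mul (Finset.range (N + 1))
        (sets := fun _ => Set.Iio S) (fun i _ => measurableSet_Iio)]
      have : ∀ i ∈ Finset.range (N + 1), P (X i ⁻¹' Set.Iio S) = p := by
        intro i _
        rw [hpdef, (hident i).measure_mem_eq measurableSet_Iio]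
      rw [Finset.prod_congr rfl this, Finset.prod_const, Finset.card_range]
    have hPB : P B = q ^ (N + 1) := by
      rw [hB, hindep.measure_inter_preimage_eq_mul (Finset.range (N + 1))
        (sets := fun _ => Set.Ioi I) (fun i _ => measurableSet_Ioi)]
      have : ∀ i ∈ Finset.range (N + 1), P (X i ⁻¹' Set.Ioi I) = q := by
        intro i _
        rw [hqdef, (hident i).measure_mem_eq measurableSet_Ioi]
      rw [Finset.prod_congr rfl this, Finset.prod_const, Finset.card_range]
    have hPC : P C = 0 := by
      rw [hC]
      refine measure_biUnion_null_iff (Finset.countable_toSet _) |>.mpr ?_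
      intro k _
      exact hCnull k
    have hPD : P D = 0 := by
      rw [hD]
      refine measure_biUnion_null_iff (Finset.countable_toSet _) |>.mpr ?_
      intro k _
      exact hDnull k
    calc P _ ≤ P ((A ∪ B) ∪ (C ∪ D)) := measure_mono hsub
      _ ≤ P (A ∪ B) + P (C ∪ D) := measure_union_le _ _
      _ ≤ (P A + P B) + (P C + P D) := add_le_add (measure_union_le _ _) (measure_union_le _ _)
      _ = p ^ (N + 1) + q ^ (N + 1) := by rw [hPA, hPB, hPC, hPD]; simp
  -- conclude by squeezing
  have htend : Tendsto (fun N : ℕ => p ^ (N + 1) + q ^ (N + 1)) atTop (nhds 0) := by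
    have h1 : Tendsto (fun n : ℕ => p ^ n) atTop (nhds 0) :=
      ENNReal.tendsto_pow_atTop_nhds_zero_of_lt_one hp
    have h2 : Tendsto (fun n : ℕ => q ^ n) atTop (nhds 0) :=
      ENNReal.tendsto_pow_atTop_nhds_zero_of_lt_one hq
    have := (h1.comp (tendsto_add_atTop_nat 1)).add (h2.comp (tendsto_add_atTop_nat 1))
    simpa using this
  exact tendsto_of_tendsto_of_tendsto_of_le_of_le tendsto_const_nhds htend
    (fun N => zero_le) hbound
end

section
/- Let C be a convex body of ℝ^m (a compact convex set with nonempty interior), H an ℝ^m-valued random variable, X = Π_C(H) the orthogonal projection of H onto C, and X_1,…,X_N i.i.d. copies of X. Let Ĥ_N = conv{X_1,…,X_N} be their convex hull. Assume that for every x ∈ int(C) and every ε > 0, P(H ∈ B̄(x,ε) ∩ int(C)) > 0. Then for every x ∈ int(C), the distance d(x, Ĥ_N) converges in probability to 0 as N → ∞. -/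
open MeasureTheory ProbabilityTheory Filter Metric ENNReal

/-- Let `C` be a convex body of `ℝ^m`, `H` an `ℝ^m`-valued random variable, `X₀ = Π_C(H)`
the metric projection of `H` onto `C`, and `X_1, X_2, …` i.i.d. copies of `X₀`. Let
`Ĉ_N = conv{X_1,…,X_N}`. If `P(H ∈ B̄(x,ε) ∩ int C) > 0` for every `x ∈ int C` and `ε > 0`,
then for every `x ∈ int C`, `d(x, Ĉ_N) → 0` in probability as `N → ∞`. -/
theorem stmt7 {Ω : Type*} [MeasurableSpace Ω] (P : Measure Ω) [IsProbabilityMeasure P]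
    (m : ℕ) (C : Set (EuclideanSpace ℝ (Fin m)))
    (hCcompact : IsCompact C) (hCconvex : Convex ℝ C) (hCint : (interior C).Nonempty)
    (H X₀ : Ω → EuclideanSpace ℝ (Fin m)) (hHm : Measurable H) (hX₀m : Measurable X₀)
    -- `X₀` is the metric projection of `H` onto `C`:
    (hproj : ∀ ω, X₀ ω ∈ C ∧ ∀ y ∈ C, dist (H ω) (X₀ ω) ≤ dist (H ω) y)
    (X : ℕ → Ω → EuclideanSpace ℝ (Fin m)) (hXm : ∀ k, Measurable (X k))
    (hindep : iIndepFun X P)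
    (hident : ∀ k, IdentDistrib (X k) X₀ P P)
    (hcharge : ∀ x ∈ interior C, ∀ ε > (0:ℝ),
      0 < P {ω | H ω ∈ closedBall x ε ∩ interior C}) :
    ∀ x ∈ interior C, ∀ ε > (0:ℝ),
      Tendsto
        (fun N : ℕ =>
          P {ω | ε < infDist x (convexHull ℝ ((fun k => X k ω) '' Set.Iio (N + 1)))})
        atTop (nhds 0) := by
  intro x hx ε hε
  have hBmeas : MeasurableSet (closedBall x ε) := measurableSet_closedBall
  have hq : 0 < P (X₀ ⁻¹' closedBall x ε) := by
    refine lt_of_lt_of_le (hcharge x hx ε hε) (measure_mono ?_)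
    intro ω hω
    have hωC : H ω ∈ C := interior_subset hω.2
    have hXH : X₀ ω = H ω := by
      have h := (hproj ω).2 (H ω) hωC
      simp only [dist_self] at h
      exact (dist_eq_zero.mp (le_antisymm h dist_nonneg)).symm
    simpa [Set.mem_preimage, hXH] using hω.1
  set r : ℝ≥0∞ := P (X₀ ⁻¹' (closedBall x ε)ᶜ) with hr
  have hr1 : r < 1 := by
    have hco : P (X₀ ⁻¹' (closedBall x ε)ᶜ) = 1 - P (X₀ ⁻¹' closedBall x ε) := by
      rw [Set.preimage_compl, measure_compl (hX₀m hBmeas) (measure_ne_top P _), measure_univ]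
    rw [hr, hco]
    exact ENNReal.sub_lt_self ENNReal.one_ne_top one_ne_zero hq.ne'
  have key : ∀ N : ℕ,
      P {ω | ε < infDist x (convexHull ℝ ((fun k => X k ω) '' Set.Iio (N + 1)))}
        ≤ r ^ (N + 1) := by
    intro N
    have hsub : {ω | ε < infDist x (convexHull ℝ ((fun k => X k ω) '' Set.Iio (N + 1)))}
        ⊆ ⋂ k ∈ Finset.range (N + 1), X k ⁻¹' (closedBall x ε)ᶜ := by
      intro ω hω
      simp only [Set.mem_iInter, Finset.mem_range, Set.mem_preimage, Set.mem_compl_iff]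
      intro k hk hmem
      have hmem' : X k ω ∈ convexHull ℝ ((fun k => X k ω) '' Set.Iio (N + 1)) :=
        subset_convexHull ℝ _ ⟨k, by simpa using hk, rfl⟩
      have h1 : infDist x (convexHull ℝ ((fun k => X k ω) '' Set.Iio (N + 1))) ≤ dist x (X k ω) := infDist_le_dist_of_mem hmem'
      have h2 : dist x (X k ω) ≤ ε := by rwa [dist_comm, ← mem_closedBall]
      have := hω.out
      linarith
    calc P {ω | ε < infDist x (convexHull ℝ ((fun k => X k ω) '' Set.Iio (N + 1)))}
        ≤ P (⋂ k ∈ Finset.range (N + 1), X k ⁻¹' (closedBall x ε)ᶜ) := measure_mono hsub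
      _ = ∏ k ∈ Finset.range (N + 1), P (X k ⁻¹' (closedBall x ε)ᶜ) :=
          hindep.measure_inter_preimage_eq_mul _ (fun _ _ => hBmeas.compl)
      _ = r ^ (N + 1) := by
          rw [Finset.prod_congr rfl fun k _ => (hident k).measure_mem_eq hBmeas.compl]
          simp [hr]
  have htend : Tendsto (fun N : ℕ => r ^ (N + 1)) atTop (nhds 0) :=
    (ENNReal.tendsto_pow_atTop_nhds_zero_of_lt_one hr1).comp (tendsto_add_atTop_nat 1)
  exact tendsto_of_tendsto_of_tendsto_of_le_of_le tendsto_const_nhds htend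
    (fun N => zero_le) key
end

section
/- Consider the reflected Euler scheme X̄_{j+1} = Π_{C(t_{j+1})}(X̄_j + b(X̄_j)Δ_n + σ(X̄_j)(W_{t_{j+1}} − W_{t_j})) with X̄_0 = x₀ ∈ C(0), where b, σ : ℝ → ℝ are Lipschitz, σ(·) ≥ m_σ > 0 on the relevant compact, W is a one-dimensional Brownian motion, t_j = jT/n, and each C(t) ⊂ [−m_C, m_C] is a compact interval. Then for every j ∈ {1,…,n}, the estimator Ĉ_{N,j} = [min_{i≤N} X̄_j^i, max_{i≤N} X̄_j^i], built from N independent copies X̄^1,…,X̄^N of the scheme, satisfies d_H(Ĉ_{N,j}, C(t_j)) → 0 in probability as N → ∞, where d_H(Ĉ_{N,j}, C(t_j)) = max{sup C(t_j) − max_i X̄_j^i, min_i X̄_j^i − inf C(t_j)}. -/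
open MeasureTheory ProbabilityTheory Filter
open scoped ENNReal NNReal

/-- One-dimensional reflected Euler scheme
`X̄_{j+1} = Π_{C(t_{j+1})}(X̄_j + b(X̄_j)Δ_n + σ(X̄_j)(W_{t_{j+1}} − W_{t_j}))`, `X̄_0 = x₀ ∈ C(0)`,
with `b, σ` Lipschitz, `σ ≥ m_σ > 0` on the relevant compact, `t_j = jT/n`, and each
`C(t) = [l(t),u(t)] ⊆ [−m_C, m_C]` a compact interval. The Brownian increments
`Z_{j+1} = W_{t_{j+1}} − W_{t_j}` are independent `N(0, T/n)` Gaussians (independent across the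
`N` copies of the scheme as well). Then for every `j ∈ {1,…,n}`, the estimator
`Ĉ_{N,j} = [min_{i≤N} X̄_j^i, max_{i≤N} X̄_j^i]` satisfies
`d_H(Ĉ_{N,j}, C(t_j)) = max{u(t_j) − max_i X̄_j^i, min_i X̄_j^i − l(t_j)} → 0` in probability. -/
theorem stmt12 {Ω : Type*} [MeasurableSpace Ω] (P : Measure Ω) [IsProbabilityMeasure P]
    (T : ℝ) (hT : 0 < T) (n : ℕ) (hn : 0 < n)
    (t : ℕ → ℝ) (ht : ∀ j, t j = j * (T / n))
    (l u : ℝ → ℝ) (hlu : ∀ s, l s ≤ u s)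
    (mC : ℝ) (hmC : 0 < mC) (hCbound : ∀ s, Set.Icc (l s) (u s) ⊆ Set.Icc (-mC) mC)
    (b σ : ℝ → ℝ) (Kb Kσ : NNReal) (hb : LipschitzWith Kb b) (hσ : LipschitzWith Kσ σ)
    (mσ : ℝ) (hmσ : 0 < mσ) (hσpos : ∀ v, |v| ≤ mC → mσ ≤ σ v)
    (x₀ : ℝ) (hx₀ : x₀ ∈ Set.Icc (l 0) (u 0))
    -- the Brownian increments of the `N` independent copies of the scheme
    (Z : ℕ → ℕ → Ω → ℝ) (hZm : ∀ i j, Measurable (Z i j))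
    (hZindep : iIndepFun
      (fun (p : ℕ × ℕ) ω => Z p.1 p.2 ω) P)
    (hZlaw : ∀ i j, P.map (Z i j) = gaussianReal 0 (T / n).toNNReal)
    -- the `N` independent copies of the reflected Euler scheme
    (Xb : ℕ → ℕ → Ω → ℝ) (hXb0 : ∀ i ω, Xb i 0 ω = x₀)
    (hXbrec : ∀ i j ω, Xb i (j + 1) ω =
      min (max (Xb i j ω + b (Xb i j ω) * (T / n) + σ (Xb i j ω) * Z i j ω)
        (l (t (j + 1)))) (u (t (j + 1)))) :
    ∀ j, 1 ≤ j → j ≤ n → ∀ ε > (0:ℝ),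
      Tendsto
        (fun N : ℕ =>
          P {ω | ε < max
            (u (t j) -
              (Finset.range (N + 1)).sup' Finset.nonempty_range_add_one (fun i => Xb i j ω))
            ((Finset.range (N + 1)).inf' Finset.nonempty_range_add_one (fun i => Xb i j ω) -
              l (t j))})
        atTop (nhds 0) := by
  intro j hj1 hjn ε hε
  obtain ⟨k, rfl⟩ : ∃ k, j = k + 1 := ⟨j - 1, (Nat.succ_pred_eq_of_pos hj1).symm⟩
  have hΔpos : (0:ℝ) < T / n := div_pos hT (by exact_mod_cast hn)
  -- bound on b over the compact
  set B : ℝ := |b 0| + Kb * mC with hB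
  have hbB : ∀ x ∈ Set.Icc (-mC) mC, |b x| ≤ B := by
    intro x hx
    have h1 : |b x - b 0| ≤ (Kb : ℝ) * |x - 0| := by
      have := hb.dist_le_mul x 0
      simpa [Real.dist_eq] using this
    have hxm : |x| ≤ mC := abs_le.mpr ⟨hx.1, hx.2⟩
    have h2 : |b x| ≤ |b 0| + |b x - b 0| := by
      have := abs_sub_abs_le_abs_sub (b x) (b 0); linarith [abs_nonneg (b x - b 0),
        abs_add_le (b 0) (b x - b 0), abs_sub_abs_le_abs_sub (b x) (b 0)]
    have h3 : (Kb : ℝ) * |x - 0| ≤ (Kb : ℝ) * mC := by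
      have : |x - 0| ≤ mC := by simpa using hxm
      exact mul_le_mul_of_nonneg_left this (Kb : NNReal).coe_nonneg
    linarith
  -- the scheme stays in the compact
  have hXmem : ∀ i m ω, Xb i m ω ∈ Set.Icc (-mC) mC := by
    intro i m ω
    cases m with
    | zero => rw [hXb0]; exact hCbound 0 hx₀
    | succ m =>
        rw [hXbrec]
        refine hCbound (t (m + 1)) ⟨?_, ?_⟩
        · exact le_min (le_max_right _ _) (hlu _)
        · exact min_le_right _ _
  set M : ℝ := max ((u (t (k + 1)) - ε + mC + (T / n) * B) / mσ) 0 with hM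
  set M' : ℝ := max ((mC + (T / n) * B - (l (t (k + 1)) + ε)) / mσ) 0 with hM'
  -- a large increment forces the scheme above u - ε
  have keyU : ∀ i ω, M ≤ Z i k ω → u (t (k + 1)) - ε ≤ Xb i (k + 1) ω := by
    intro i ω hZ
    rw [hXbrec]
    set x := Xb i k ω with hx
    have hxm : x ∈ Set.Icc (-mC) mC := hXmem i k ω
    have hσx : mσ ≤ σ x := hσpos x (abs_le.mpr ⟨hxm.1, hxm.2⟩)
    have hbx := hbB x hxm
    have hM0 : (0:ℝ) ≤ M := le_max_right _ _
    have h1 : u (t (k + 1)) - ε + mC + (T / n) * B ≤ mσ * M :=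
      (div_le_iff₀' hmσ).mp (le_max_left _ _)
    have h2 : mσ * M ≤ σ x * Z i k ω := by
      have ha : mσ * M ≤ σ x * M := mul_le_mul_of_nonneg_right hσx hM0
      have hb2 : σ x * M ≤ σ x * Z i k ω :=
        mul_le_mul_of_nonneg_left hZ (le_trans hmσ.le hσx)
      linarith
    have hbx' : -(B * (T / n)) ≤ b x * (T / n) := by
      have := (abs_le.mp hbx).1
      nlinarith [hΔpos.le]
    have hH : u (t (k + 1)) - ε ≤ x + b x * (T / n) + σ x * Z i k ω := by
      have := hxm.1
      nlinarith
    exact le_min (le_trans hH (le_max_left _ _)) (by linarith)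
  -- a very negative increment forces the scheme below l + ε
  have keyL : ∀ i ω, Z i k ω ≤ -M' → Xb i (k + 1) ω ≤ l (t (k + 1)) + ε := by
    intro i ω hZ
    rw [hXbrec]
    set x := Xb i k ω with hx
    have hxm : x ∈ Set.Icc (-mC) mC := hXmem i k ω
    have hσx : mσ ≤ σ x := hσpos x (abs_le.mpr ⟨hxm.1, hxm.2⟩)
    have hbx := hbB x hxm
    have hM0 : (0:ℝ) ≤ M' := le_max_right _ _
    have h1 : mC + (T / n) * B - (l (t (k + 1)) + ε) ≤ mσ * M' :=
      (div_le_iff₀' hmσ).mp (le_max_left _ _)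
    have h2 : σ x * Z i k ω ≤ -(mσ * M') := by
      have ha : σ x * Z i k ω ≤ σ x * (-M') :=
        mul_le_mul_of_nonneg_left hZ (le_trans hmσ.le hσx)
      have hb2 : mσ * M' ≤ σ x * M' := mul_le_mul_of_nonneg_right hσx hM0
      nlinarith
    have hbx' : b x * (T / n) ≤ B * (T / n) := by
      have := (abs_le.mp hbx).2
      nlinarith [hΔpos.le]
    have hH : x + b x * (T / n) + σ x * Z i k ω ≤ l (t (k + 1)) + ε := by
      have := hxm.2
      nlinarith
    exact le_trans (min_le_left _ _) (max_le hH (by linarith))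
  -- law and independence facts
  have hv : (T / n).toNNReal ≠ 0 := (Real.toNNReal_pos.mpr hΔpos).ne'
  have hprod : ∀ (N : ℕ) (s : Set ℝ), MeasurableSet s →
      P (⋂ i ∈ Finset.range (N + 1), Z i k ⁻¹' s)
        = (gaussianReal 0 (T / n).toNNReal s) ^ (N + 1) := by
    intro N s hs
    have hinj : ∀ a ∈ Finset.range (N + 1), ∀ b ∈ Finset.range (N + 1),
        (fun i => (i, k)) a = (fun i => (i, k)) b → a = b := by
      intro a _ b _ hab
      simpa using congrArg Prod.fst hab
    have h := hZindep.meas_biInter (S := (Finset.range (N + 1)).image (fun i => (i, k)))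
      (s := fun p => Z p.1 p.2 ⁻¹' s) (fun p _ => ⟨s, hs, rfl⟩)
    rw [Finset.set_biInter_finset_image, Finset.prod_image hinj] at h
    rw [h]
    have heach : ∀ i, P (Z i k ⁻¹' s) = gaussianReal 0 (T / n).toNNReal s := by
      intro i
      rw [← Measure.map_apply (hZm i k) hs, hZlaw i k]
    rw [Finset.prod_congr rfl (fun i _ => heach i), Finset.prod_const, Finset.card_range]
  -- tail masses are positive
  have htail : ∀ s : Set ℝ, volume s ≠ 0 → gaussianReal 0 (T / n).toNNReal s ≠ 0 := by
    intro s hvol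
    rw [gaussianReal_of_var_ne_zero 0 hv, Ne,
      withDensity_apply_eq_zero (measurable_gaussianPDF 0 _)]
    have : {x | gaussianPDF 0 (T / n).toNNReal x ≠ 0} = Set.univ :=
      Set.eq_univ_of_forall fun x => (gaussianPDF_pos 0 hv x).ne'
    rw [this, Set.univ_inter]
    exact hvol
  set q : ℝ≥0∞ := gaussianReal 0 (T / n).toNNReal (Set.Iio M) with hq_def
  set q' : ℝ≥0∞ := gaussianReal 0 (T / n).toNNReal (Set.Ioi (-M')) with hq'_def
  have hq : q < 1 := by
    have hne : gaussianReal 0 (T / n).toNNReal (Set.Ici M) ≠ 0 :=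
      htail _ (by simp [Real.volume_Ici])
    have hunion : q + gaussianReal 0 (T / n).toNNReal (Set.Ici M) = 1 := by
      rw [hq_def, ← measure_union (Set.Iio_disjoint_Ici le_rfl) measurableSet_Ici,
        Set.Iio_union_Ici, measure_univ]
    calc q < q + gaussianReal 0 (T / n).toNNReal (Set.Ici M) :=
          ENNReal.lt_add_right (measure_ne_top _ _) hne
      _ = 1 := hunion
  have hq' : q' < 1 := by
    have hne : gaussianReal 0 (T / n).toNNReal (Set.Iic (-M')) ≠ 0 :=
      htail _ (by simp [Real.volume_Iic])
    have hunion : gaussianReal 0 (T / n).toNNReal (Set.Iic (-M')) + q' = 1 := by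
      rw [hq'_def, ← measure_union (Set.Iic_disjoint_Ioi le_rfl) measurableSet_Ioi,
        Set.Iic_union_Ioi, measure_univ]
    calc q' < q' + gaussianReal 0 (T / n).toNNReal (Set.Iic (-M')) :=
          ENNReal.lt_add_right (measure_ne_top _ _) hne
      _ = 1 := by rw [add_comm]; exact hunion
  -- the bad event is contained in the union of two independent-intersection events
  have hsub : ∀ N : ℕ,
      {ω | ε < max
        (u (t (k + 1)) -
          (Finset.range (N + 1)).sup' Finset.nonempty_range_add_one (fun i => Xb i (k + 1) ω))
        ((Finset.range (N + 1)).inf' Finset.nonempty_range_add_one (fun i => Xb i (k + 1) ω) -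
          l (t (k + 1)))} ⊆
      (⋂ i ∈ Finset.range (N + 1), Z i k ⁻¹' Set.Iio M) ∪
      (⋂ i ∈ Finset.range (N + 1), Z i k ⁻¹' Set.Ioi (-M')) := by
    intro N ω hω
    simp only [Set.mem_setOf_eq, lt_max_iff] at hω
    rcases hω with h | h
    · left
      simp only [Set.mem_iInter, Set.mem_preimage, Set.mem_Iio]
      intro i hi
      by_contra h'
      push_neg at h'
      have h1 := keyU i ω h'
      have h2 : Xb i (k + 1) ω < u (t (k + 1)) - ε := by
        have hsup : (Finset.range (N + 1)).sup' Finset.nonempty_range_add_one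
            (fun i => Xb i (k + 1) ω) < u (t (k + 1)) - ε := by linarith
        exact (Finset.sup'_lt_iff _).mp hsup i hi
      linarith
    · right
      simp only [Set.mem_iInter, Set.mem_preimage, Set.mem_Ioi]
      intro i hi
      by_contra h'
      push_neg at h'
      have h1 := keyL i ω h'
      have h2 : l (t (k + 1)) + ε < Xb i (k + 1) ω := by
        have hinf : l (t (k + 1)) + ε < (Finset.range (N + 1)).inf'
            Finset.nonempty_range_add_one (fun i => Xb i (k + 1) ω) := by linarith
        exact (Finset.lt_inf'_iff _).mp hinf i hi
      linarith
  have hbound : ∀ N : ℕ,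
      P {ω | ε < max
        (u (t (k + 1)) -
          (Finset.range (N + 1)).sup' Finset.nonempty_range_add_one (fun i => Xb i (k + 1) ω))
        ((Finset.range (N + 1)).inf' Finset.nonempty_range_add_one (fun i => Xb i (k + 1) ω) -
          l (t (k + 1)))} ≤ q ^ (N + 1) + q' ^ (N + 1) := by
    intro N
    refine le_trans (measure_mono (hsub N)) (le_trans (measure_union_le _ _) ?_)
    rw [hprod N _ measurableSet_Iio, hprod N _ measurableSet_Ioi]
  have h1 : Tendsto (fun N : ℕ => q ^ (N + 1)) atTop (nhds 0) :=
    (ENNReal.tendsto_pow_atTop_nhds_zero_of_lt_one hq).comp (tendsto_add_atTop_nat 1)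
  have h2 : Tendsto (fun N : ℕ => q' ^ (N + 1)) atTop (nhds 0) :=
    (ENNReal.tendsto_pow_atTop_nhds_zero_of_lt_one hq').comp (tendsto_add_atTop_nat 1)
  refine tendsto_of_tendsto_of_tendsto_of_le_of_le tendsto_const_nhds ?_
    (fun N => zero_le) hbound
  simpa using h1.add h2
end

section
/- In the setting of the one-dimensional reflected Euler scheme with constant diffusion coefficient σ(·) ≡ s > 0, the estimator Ĉ_{N,j} satisfies N·d_H(Ĉ_{N,j}, C(t_j)) → 0 in probability as N → ∞, for every j ∈ {1,…,n}. -/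
open MeasureTheory ProbabilityTheory Filter

noncomputable def eulerRec (b : ℝ → ℝ) (Δ sc : ℝ) (lo hi : ℕ → ℝ) (x₀ : ℝ) :
    ℕ → (ℕ → ℝ) → ℝ
  | 0, _ => x₀
  | (m + 1), v =>
      min (max (eulerRec b Δ sc lo hi x₀ m v + b (eulerRec b Δ sc lo hi x₀ m v) * Δ
        + sc * v m) (lo (m + 1))) (hi (m + 1))

lemma eulerRec_measurable (b : ℝ → ℝ) (hb : Continuous b) (Δ sc : ℝ) (lo hi : ℕ → ℝ)
    (x₀ : ℝ) : ∀ m, Measurable (eulerRec b Δ sc lo hi x₀ m) := by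
  intro m
  induction m with
  | zero => exact measurable_const
  | succ m ih =>
      exact (((ih.add ((hb.measurable.comp ih).mul_const Δ)).add
        ((measurable_pi_apply m).const_mul sc)).max measurable_const).min measurable_const

lemma eulerRec_congr (b : ℝ → ℝ) (Δ sc : ℝ) (lo hi : ℕ → ℝ) (x₀ : ℝ) :
    ∀ m (v w : ℕ → ℝ), (∀ k, k < m → v k = w k) →
      eulerRec b Δ sc lo hi x₀ m v = eulerRec b Δ sc lo hi x₀ m w := by
  intro m
  induction m with
  | zero => intro v w _; rfl
  | succ m ih =>
      intro v w h
      have h1 : eulerRec b Δ sc lo hi x₀ m v = eulerRec b Δ sc lo hi x₀ m w :=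
        ih v w fun k hk => h k (hk.trans (Nat.lt_succ_self m))
      simp only [eulerRec, h1, h m (Nat.lt_succ_self m)]

lemma gaussianReal_pos_of_pos_volume {v : NNReal} (hv : v ≠ 0) (μ : ℝ) {s : Set ℝ}
    (hs : volume s ≠ 0) : 0 < gaussianReal μ v s := by
  rw [pos_iff_ne_zero, gaussianReal_of_var_ne_zero _ hv]
  intro h0
  rw [withDensity_apply_eq_zero' (measurable_gaussianPDF μ v).aemeasurable] at h0
  have : {x | gaussianPDF μ v x ≠ 0} ∩ s = s := by
    apply Set.inter_eq_self_of_subset_right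
    intro x _
    simp only [Set.mem_setOf_eq, gaussianPDF, ne_eq, ENNReal.ofReal_eq_zero, not_le]
    exact gaussianPDFReal_pos μ v x hv
  rw [this] at h0
  exact hs h0

/-- One-dimensional reflected Euler scheme with constant diffusion coefficient
`σ(·) ≡ s > 0`: `X̄_{j+1} = Π_{C(t_{j+1})}(X̄_j + b(X̄_j)Δ_n + s(W_{t_{j+1}} − W_{t_j}))`,
`X̄_0 = x₀ ∈ C(0)`, with `b` Lipschitz, `t_j = jT/n`, and each
`C(t) = [l(t),u(t)] ⊆ [−m_C, m_C]` a compact interval. Then for every `j ∈ {1,…,n}`,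
`N · d_H(Ĉ_{N,j}, C(t_j)) → 0` in probability as `N → ∞`, where
`Ĉ_{N,j}` is the interval spanned by the `j`-th step of `N` independent copies. -/
theorem stmt13 {Ω : Type*} [MeasurableSpace Ω] (P : Measure Ω) [IsProbabilityMeasure P]
    (T : ℝ) (hT : 0 < T) (n : ℕ) (hn : 0 < n)
    (t : ℕ → ℝ) (ht : ∀ j, t j = j * (T / n))
    (l u : ℝ → ℝ) (hlu : ∀ s', l s' ≤ u s')
    (mC : ℝ) (hmC : 0 < mC) (hCbound : ∀ s', Set.Icc (l s') (u s') ⊆ Set.Icc (-mC) mC)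
    (b : ℝ → ℝ) (Kb : NNReal) (hb : LipschitzWith Kb b)
    (s : ℝ) (hs : 0 < s)
    (x₀ : ℝ) (hx₀ : x₀ ∈ Set.Icc (l 0) (u 0))
    -- the Brownian increments of the `N` independent copies of the scheme
    (Z : ℕ → ℕ → Ω → ℝ) (hZm : ∀ i j, Measurable (Z i j))
    (hZindep : iIndepFun
      (fun (p : ℕ × ℕ) ω => Z p.1 p.2 ω) P)
    (hZlaw : ∀ i j, P.map (Z i j) = gaussianReal 0 (T / n).toNNReal)
    -- the `N` independent copies of the reflected Euler scheme
    (Xb : ℕ → ℕ → Ω → ℝ) (hXb0 : ∀ i ω, Xb i 0 ω = x₀)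
    (hXbrec : ∀ i j ω, Xb i (j + 1) ω =
      min (max (Xb i j ω + b (Xb i j ω) * (T / n) + s * Z i j ω)
        (l (t (j + 1)))) (u (t (j + 1)))) :
    ∀ j, 1 ≤ j → j ≤ n → ∀ ε > (0:ℝ),
      Tendsto
        (fun N : ℕ =>
          P {ω | ε < ((N:ℝ) + 1) * max
            (u (t j) -
              (Finset.range (N + 1)).sup' Finset.nonempty_range_add_one (fun i => Xb i j ω))
            ((Finset.range (N + 1)).inf' Finset.nonempty_range_add_one (fun i => Xb i j ω) -
              l (t j))})
        atTop (nhds 0) := by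
  intro j hj1 _hj2 ε hε
  obtain ⟨m, rfl⟩ : ∃ m, j = m + 1 := ⟨j - 1, (Nat.succ_pred_eq_of_pos hj1).symm⟩
  set Δ : ℝ := T / n with hΔdef
  have hΔpos : 0 < Δ := div_pos hT (Nat.cast_pos.mpr hn)
  -- bound on the scheme
  have hbound : ∀ i k ω, Xb i k ω ∈ Set.Icc (-mC) mC := by
    intro i k ω
    cases k with
    | zero => rw [hXb0]; exact hCbound 0 hx₀
    | succ k =>
        rw [hXbrec]
        exact hCbound (t (k + 1)) ⟨le_min (le_max_right _ _) (hlu _),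
          min_le_right _ _⟩
  -- bound on the drift
  set B : ℝ := |b 0| + Kb * mC with hBdef
  have hbB : ∀ x : ℝ, x ∈ Set.Icc (-mC) mC → |b x| ≤ B := by
    intro x hx
    have h1 : |b x - b 0| ≤ Kb * |x - 0| := by
      have := hb.dist_le_mul x 0
      rwa [Real.dist_eq, Real.dist_eq] at this
    have h2 : |x| ≤ mC := abs_le.mpr ⟨hx.1, hx.2⟩
    calc |b x| ≤ |b x - b 0| + |b 0| := by
          have := abs_sub_abs_le_abs_sub (b x) (b 0); linarith [abs_nonneg (b x - b 0)]
      _ ≤ Kb * mC + |b 0| := by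
          refine add_le_add ?_ le_rfl
          refine h1.trans ?_
          simp only [sub_zero]
          exact mul_le_mul_of_nonneg_left h2 Kb.coe_nonneg
      _ = B := by ring
  set lo : ℕ → ℝ := fun k => l (t k) with hlodef
  set hi : ℕ → ℝ := fun k => u (t k) with hhidef
  -- representation of the scheme as a function of the noise
  have hrep : ∀ i k ω, Xb i k ω = eulerRec b Δ s lo hi x₀ k (fun r => Z i r ω) := by
    intro i k ω
    induction k with
    | zero => rw [hXb0]; rfl
    | succ k ih => rw [hXbrec, ih]; rfl
  -- measurability of the scheme
  have hXm : ∀ i k, Measurable (Xb i k) := by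
    intro i k
    have : Xb i k = fun ω => eulerRec b Δ s lo hi x₀ k (fun r => Z i r ω) :=
      funext fun ω => hrep i k ω
    rw [this]
    exact (eulerRec_measurable b hb.continuous Δ s lo hi x₀ k).comp
      (measurable_pi_lambda _ fun r => hZm i r)
  -- constants and the atom events
  set cu : ℝ := (u (t (m + 1)) + mC + B * Δ) / s with hcudef
  set cl : ℝ := (l (t (m + 1)) - mC - B * Δ) / s with hcldef
  have hatom_u : ∀ i ω, cu ≤ Z i m ω → Xb i (m + 1) ω = u (t (m + 1)) := by
    intro i ω hZc
    rw [hXbrec]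
    have hsZ : u (t (m + 1)) + mC + B * Δ ≤ s * Z i m ω := by
      have := mul_le_mul_of_nonneg_left hZc hs.le
      rwa [mul_div_cancel₀ _ (ne_of_gt hs)] at this
    have hx : -mC ≤ Xb i m ω := (hbound i m ω).1
    have hbx : -(B * Δ) ≤ b (Xb i m ω) * Δ := by
      have h1 : -B ≤ b (Xb i m ω) := neg_le_of_abs_le (hbB _ (hbound i m ω))
      nlinarith
    have : u (t (m + 1)) ≤ Xb i m ω + b (Xb i m ω) * Δ + s * Z i m ω := by linarith
    rw [min_eq_right (le_max_of_le_left this)]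
  have hatom_l : ∀ i ω, Z i m ω ≤ cl → Xb i (m + 1) ω = l (t (m + 1)) := by
    intro i ω hZc
    rw [hXbrec]
    have hsZ : s * Z i m ω ≤ l (t (m + 1)) - mC - B * Δ := by
      have := mul_le_mul_of_nonneg_left hZc hs.le
      rwa [mul_div_cancel₀ _ (ne_of_gt hs)] at this
    have hx : Xb i m ω ≤ mC := (hbound i m ω).2
    have hbx : b (Xb i m ω) * Δ ≤ B * Δ := by
      have h1 : b (Xb i m ω) ≤ B := le_of_abs_le (hbB _ (hbound i m ω))
      nlinarith
    have : Xb i m ω + b (Xb i m ω) * Δ + s * Z i m ω ≤ l (t (m + 1)) := by linarith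
    rw [max_eq_right this, min_eq_left (hlu _)]
  -- the variance is nonzero
  have hv : (T / n).toNNReal ≠ 0 := ne_of_gt (Real.toNNReal_pos.mpr hΔpos)
  -- boundary-avoiding probabilities
  set ru : ENNReal := gaussianReal 0 (T / n).toNNReal (Set.Iio cu) with hrudef
  set rl : ENNReal := gaussianReal 0 (T / n).toNNReal (Set.Ioi cl) with hrldef
  have hZlaw_apply : ∀ i (D : Set ℝ), MeasurableSet D →
      P (Z i m ⁻¹' D) = gaussianReal 0 (T / n).toNNReal D := by
    intro i D hD
    rw [← hZlaw i m, Measure.map_apply (hZm i m) hD]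
  have hru1 : ru < 1 := by
    have hq : 0 < gaussianReal 0 (T / n).toNNReal (Set.Ici cu) :=
      gaussianReal_pos_of_pos_volume hv 0 (by simp [Real.volume_Ici])
    have hsum : ru + gaussianReal 0 (T / n).toNNReal (Set.Ici cu) = 1 := by
      rw [hrudef, ← measure_union (by simp [Set.disjoint_left]) measurableSet_Ici,
        Set.Iio_union_Ici, measure_univ]
    refine lt_of_le_of_ne prob_le_one fun h1 => ?_
    rw [h1] at hsum
    have : (1 : ENNReal) + gaussianReal 0 (T / n).toNNReal (Set.Ici cu) = 1 + 0 := by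
      simpa using hsum
    exact hq.ne' ((ENNReal.add_right_inj ENNReal.one_ne_top).mp this)
  have hrl1 : rl < 1 := by
    have hq : 0 < gaussianReal 0 (T / n).toNNReal (Set.Iic cl) :=
      gaussianReal_pos_of_pos_volume hv 0 (by simp [Real.volume_Iic])
    have hsum : gaussianReal 0 (T / n).toNNReal (Set.Iic cl) + rl = 1 := by
      rw [hrldef, ← measure_union (by simp [Set.disjoint_left])
        measurableSet_Ioi, Set.Iic_union_Ioi, measure_univ]
    refine lt_of_le_of_ne prob_le_one fun h1 => ?_
    rw [h1, add_comm] at hsum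
    have : (1 : ENNReal) + gaussianReal 0 (T / n).toNNReal (Set.Iic cl) = 1 + 0 := by
      simpa using hsum
    exact hq.ne' ((ENNReal.add_right_inj ENNReal.one_ne_top).mp this)
  -- single-copy bounds
  have hsingle_u : ∀ i, P (Xb i (m + 1) ⁻¹' Set.Iio (u (t (m + 1)))) ≤ ru := by
    intro i
    rw [hrudef, ← hZlaw_apply i _ measurableSet_Iio]
    refine measure_mono fun ω hω => ?_
    simp only [Set.mem_preimage, Set.mem_Iio] at *
    by_contra hc
    push_neg at hc
    exact absurd (hatom_u i ω hc) (ne_of_lt hω)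
  have hsingle_l : ∀ i, P (Xb i (m + 1) ⁻¹' Set.Ioi (l (t (m + 1)))) ≤ rl := by
    intro i
    rw [hrldef, ← hZlaw_apply i _ measurableSet_Ioi]
    refine measure_mono fun ω hω => ?_
    simp only [Set.mem_preimage, Set.mem_Ioi] at *
    by_contra hc
    push_neg at hc
    exact absurd (hatom_l i ω hc) (ne_of_gt hω)
  -- product bound via independence
  have key : ∀ (D : Set ℝ), MeasurableSet D → ∀ (ρ : ENNReal),
      (∀ i, P (Xb i (m + 1) ⁻¹' D) ≤ ρ) →
      ∀ N : ℕ, P (⋂ i ∈ Finset.range (N + 1), Xb i (m + 1) ⁻¹' D) ≤ ρ ^ (N + 1) := by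
    intro D hD ρ hρ N
    induction N with
    | zero => simpa using hρ 0
    | succ N ih =>
        classical
        set S : Finset (ℕ × ℕ) := {N + 1} ×ˢ Finset.range (m + 1) with hSdef
        set Tf : Finset (ℕ × ℕ) := Finset.range (N + 1) ×ˢ Finset.range (m + 1) with hTdef
        have hdisj : Disjoint S Tf := by
          rw [Finset.disjoint_left]
          intro p hpS hpT
          simp only [hSdef, hTdef, Finset.mem_product, Finset.mem_singleton,
            Finset.mem_range] at hpS hpT
          omega
        have hIF := hZindep.indepFun_finset S Tf hdisj (fun p => hZm p.1 p.2)
        set rS : (S → ℝ) → (ℕ → ℝ) := fun v k =>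
          if h : ((N + 1 : ℕ), k) ∈ S then v ⟨(N + 1, k), h⟩ else 0 with hrSdef
        have hrSm : Measurable rS := measurable_pi_lambda _ fun k => by
          by_cases h : ((N + 1 : ℕ), k) ∈ S
          · simp only [hrSdef, dif_pos h]; exact measurable_pi_apply _
          · simp only [hrSdef, dif_neg h]; exact measurable_const
        set φ : (S → ℝ) → ℝ := fun v => eulerRec b Δ s lo hi x₀ (m + 1) (rS v) with hφdef
        have hφm : Measurable φ :=
          (eulerRec_measurable b hb.continuous Δ s lo hi x₀ (m + 1)).comp hrSm
        have hφeq : ∀ ω, φ (fun (p : S) => Z (p : ℕ × ℕ).1 (p : ℕ × ℕ).2 ω)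
            = Xb (N + 1) (m + 1) ω := by
          intro ω
          rw [hrep (N + 1) (m + 1) ω]
          apply eulerRec_congr
          intro k hk
          have hmem : ((N + 1 : ℕ), k) ∈ S := by
            simp [hSdef, Finset.mem_product, Finset.mem_range, hk]
          simp only [hrSdef, dif_pos hmem]
        set rT : ℕ → (Tf → ℝ) → (ℕ → ℝ) := fun i v k =>
          if h : (i, k) ∈ Tf then v ⟨(i, k), h⟩ else 0 with hrTdef
        have hrTm : ∀ i, Measurable (rT i) := fun i => measurable_pi_lambda _ fun k => by
          by_cases h : (i, k) ∈ Tf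
          · simp only [hrTdef, dif_pos h]; exact measurable_pi_apply _
          · simp only [hrTdef, dif_neg h]; exact measurable_const
        set ψ : Set (Tf → ℝ) := ⋂ i ∈ Finset.range (N + 1),
          (fun v => eulerRec b Δ s lo hi x₀ (m + 1) (rT i v)) ⁻¹' D with hψdef
        have hψm : MeasurableSet ψ := by
          refine MeasurableSet.biInter (Set.to_countable _) fun i _ => ?_
          exact ((eulerRec_measurable b hb.continuous Δ s lo hi x₀ (m + 1)).comp (hrTm i)) hD
        have hψeq : (fun ω (p : Tf) => Z (p : ℕ × ℕ).1 (p : ℕ × ℕ).2 ω) ⁻¹' ψ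
            = ⋂ i ∈ Finset.range (N + 1), Xb i (m + 1) ⁻¹' D := by
          ext ω
          simp only [hψdef, Set.mem_preimage, Set.mem_iInter]
          refine forall_congr' fun i => forall_congr' fun hiN => ?_
          have heq : eulerRec b Δ s lo hi x₀ (m + 1)
              (rT i (fun (p : Tf) => Z (p : ℕ × ℕ).1 (p : ℕ × ℕ).2 ω)) = Xb i (m + 1) ω := by
            rw [hrep i (m + 1) ω]
            apply eulerRec_congr
            intro k hk
            have hmem : (i, k) ∈ Tf := by
              simp [hTdef, Finset.mem_product, Finset.mem_range.mp hiN, hk]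
            simp only [hrTdef, dif_pos hmem]
          rw [heq]
        have hAeq : (fun ω (p : S) => Z (p : ℕ × ℕ).1 (p : ℕ × ℕ).2 ω) ⁻¹' (φ ⁻¹' D)
            = Xb (N + 1) (m + 1) ⁻¹' D := by
          ext ω
          simp only [Set.mem_preimage]
          rw [hφeq ω]
        have hstep := indepFun_iff_measure_inter_preimage_eq_mul.mp hIF (φ ⁻¹' D) ψ
          (hφm hD) hψm
        calc P (⋂ i ∈ Finset.range (N + 1 + 1), Xb i (m + 1) ⁻¹' D)
            = P ((fun ω (p : S) => Z (p : ℕ × ℕ).1 (p : ℕ × ℕ).2 ω) ⁻¹' (φ ⁻¹' D) ∩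
                (fun ω (p : Tf) => Z (p : ℕ × ℕ).1 (p : ℕ × ℕ).2 ω) ⁻¹' ψ) := by
              rw [Finset.range_add_one, Finset.set_biInter_insert, hAeq, hψeq]
          _ = P ((fun ω (p : S) => Z (p : ℕ × ℕ).1 (p : ℕ × ℕ).2 ω) ⁻¹' (φ ⁻¹' D)) *
                P ((fun ω (p : Tf) => Z (p : ℕ × ℕ).1 (p : ℕ × ℕ).2 ω) ⁻¹' ψ) := hstep
          _ ≤ ρ * ρ ^ (N + 1) := by
              refine mul_le_mul' ?_ ?_
              · rw [hAeq]; exact hρ (N + 1)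
              · rw [hψeq]; exact ih
          _ = ρ ^ (N + 1 + 1) := by ring
  -- the final bound
  have hfinal : ∀ N : ℕ,
      P {ω | ε < ((N:ℝ) + 1) * max
        (u (t (m + 1)) -
          (Finset.range (N + 1)).sup' Finset.nonempty_range_add_one (fun i => Xb i (m + 1) ω))
        ((Finset.range (N + 1)).inf' Finset.nonempty_range_add_one (fun i => Xb i (m + 1) ω) -
          l (t (m + 1)))} ≤ ru ^ (N + 1) + rl ^ (N + 1) := by
    intro N
    have hsub : {ω | ε < ((N:ℝ) + 1) * max
        (u (t (m + 1)) -
          (Finset.range (N + 1)).sup' Finset.nonempty_range_add_one (fun i => Xb i (m + 1) ω))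
        ((Finset.range (N + 1)).inf' Finset.nonempty_range_add_one (fun i => Xb i (m + 1) ω) -
          l (t (m + 1)))} ⊆
        (⋂ i ∈ Finset.range (N + 1), Xb i (m + 1) ⁻¹' Set.Iio (u (t (m + 1)))) ∪
        (⋂ i ∈ Finset.range (N + 1), Xb i (m + 1) ⁻¹' Set.Ioi (l (t (m + 1)))) := by
      intro ω hω
      simp only [Set.mem_setOf_eq] at hω
      have hmaxpos : 0 < max
          (u (t (m + 1)) -
            (Finset.range (N + 1)).sup' Finset.nonempty_range_add_one (fun i => Xb i (m + 1) ω))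
          ((Finset.range (N + 1)).inf' Finset.nonempty_range_add_one (fun i => Xb i (m + 1) ω) -
            l (t (m + 1))) := by
        by_contra hc
        push_neg at hc
        have hN1 : (0:ℝ) ≤ (N:ℝ) + 1 := by positivity
        nlinarith
      rcases lt_max_iff.mp hmaxpos with h | h
      · left
        simp only [Set.mem_iInter, Set.mem_preimage, Set.mem_Iio]
        intro i hiN
        exact lt_of_le_of_lt (Finset.le_sup' (fun i => Xb i (m + 1) ω) hiN) (sub_pos.mp h)
      · right
        simp only [Set.mem_iInter, Set.mem_preimage, Set.mem_Ioi]
        intro i hiN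
        exact lt_of_lt_of_le (sub_pos.mp h) (Finset.inf'_le (fun i => Xb i (m + 1) ω) hiN)
    calc P _ ≤ P ((⋂ i ∈ Finset.range (N + 1), Xb i (m + 1) ⁻¹' Set.Iio (u (t (m + 1)))) ∪
          (⋂ i ∈ Finset.range (N + 1), Xb i (m + 1) ⁻¹' Set.Ioi (l (t (m + 1))))) :=
        measure_mono hsub
      _ ≤ P (⋂ i ∈ Finset.range (N + 1), Xb i (m + 1) ⁻¹' Set.Iio (u (t (m + 1)))) +
          P (⋂ i ∈ Finset.range (N + 1), Xb i (m + 1) ⁻¹' Set.Ioi (l (t (m + 1)))) :=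
        measure_union_le _ _
      _ ≤ ru ^ (N + 1) + rl ^ (N + 1) :=
        add_le_add (key _ measurableSet_Iio ru hsingle_u N)
          (key _ measurableSet_Ioi rl hsingle_l N)
  have hten : Tendsto (fun N : ℕ => ru ^ (N + 1) + rl ^ (N + 1)) atTop (nhds 0) := by
    have h1 : Tendsto (fun N : ℕ => ru ^ (N + 1)) atTop (nhds 0) :=
      (ENNReal.tendsto_pow_atTop_nhds_zero_of_lt_one hru1).comp (tendsto_add_atTop_nat 1)
    have h2 : Tendsto (fun N : ℕ => rl ^ (N + 1)) atTop (nhds 0) :=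
      (ENNReal.tendsto_pow_atTop_nhds_zero_of_lt_one hrl1).comp (tendsto_add_atTop_nat 1)
    simpa using h1.add h2
  exact tendsto_of_tendsto_of_tendsto_of_le_of_le tendsto_const_nhds hten
    (fun N => zero_le) hfinal
end

section
/- Consider the reflected Euler scheme in ℝ^m: X̄_{j+1} = Π_{C(t_{j+1})}(X̄_j + b(X̄_j)Δ_n + σ(X̄_j)(W_{t_{j+1}} − W_{t_j})), X̄_0 = x₀ ∈ C(0), with b : ℝ^m → ℝ^m and σ : ℝ^m → GL_m(ℝ) Lipschitz, W an m-dimensional Brownian motion, and C(t) convex bodies with C(t) ⊂ C(s) for t ≥ s. Let H_j = X̄_{j−1} + b(X̄_{j−1})Δ_n + σ(X̄_{j−1})(W_{t_j} − W_{t_{j−1}}). Then for every j ∈ {1,…,n}, every x ∈ int(C(t_j)), and every ε > 0, P(H_j ∈ B̄(x,ε) ∩ int(C(t_j))) > 0. -/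
open MeasureTheory ProbabilityTheory Filter Metric

set_option maxHeartbeats 400000

/-- A function satisfying the metric-projection property onto a convex set is 1-Lipschitz. -/
lemma proj_lipschitz {F : Type*} [NormedAddCommGroup F] [InnerProductSpace ℝ F]
    {K : Set F} (hK : Convex ℝ K) (p : F → F)
    (hp : ∀ x, p x ∈ K ∧ ∀ y ∈ K, dist x (p x) ≤ dist x y) :
    LipschitzWith 1 p := by
  have hchar : ∀ x, ∀ w ∈ K, (inner ℝ (x - p x) (w - p x) : ℝ) ≤ 0 := by
    intro x
    have hne : Nonempty K := ⟨⟨p x, (hp x).1⟩⟩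
    have hmin : ‖x - p x‖ = ⨅ w : K, ‖x - w‖ := by
      refine le_antisymm (le_ciInf fun w => ?_) (ciInf_le ⟨0, fun a ⟨w, hw⟩ => hw ▸ norm_nonneg _⟩
        (⟨p x, (hp x).1⟩ : K))
      have := (hp x).2 w w.2
      simpa [dist_eq_norm] using this
    exact (norm_eq_iInf_iff_real_inner_le_zero hK (hp x).1).mp hmin
  refine LipschitzWith.of_dist_le_mul fun x y => ?_
  rw [NNReal.coe_one, one_mul]
  set a := p x
  set c := p y
  have h1 : (inner ℝ (x - a) (c - a) : ℝ) ≤ 0 := hchar x c (hp y).1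
  have h2 : (inner ℝ (y - c) (a - c) : ℝ) ≤ 0 := hchar y a (hp x).1
  have key : ‖c - a‖ * ‖c - a‖ ≤ ‖y - x‖ * ‖c - a‖ := by
    have hsq : ‖c - a‖ * ‖c - a‖ = (inner ℝ (c - a) (c - a) : ℝ) :=
      (real_inner_self_eq_norm_mul_norm _).symm
    have hdecomp : (inner ℝ (c - a) (c - a) : ℝ)
        = (inner ℝ (c - y) (c - a) : ℝ) + (inner ℝ (y - x) (c - a) : ℝ)
          + (inner ℝ (x - a) (c - a) : ℝ) := by
      rw [← inner_add_left, ← inner_add_left]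
      congr 1
      abel
    have h3 : (inner ℝ (c - y) (c - a) : ℝ) ≤ 0 := by
      have : (inner ℝ (-(y - c)) (-(a - c)) : ℝ) ≤ 0 := by rwa [inner_neg_neg]
      simpa [neg_sub] using this
    have h4 : (inner ℝ (y - x) (c - a) : ℝ) ≤ ‖y - x‖ * ‖c - a‖ := real_inner_le_norm _ _
    calc ‖c - a‖ * ‖c - a‖
        = (inner ℝ (c - y) (c - a) : ℝ) + (inner ℝ (y - x) (c - a) : ℝ)
          + (inner ℝ (x - a) (c - a) : ℝ) := by rw [hsq, hdecomp]
      _ ≤ 0 + (‖y - x‖ * ‖c - a‖) + 0 := by gcongr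
      _ = ‖y - x‖ * ‖c - a‖ := by ring
  have hle : ‖c - a‖ ≤ ‖y - x‖ := by
    rcases eq_or_lt_of_le (norm_nonneg (c - a)) with h0 | h0
    · rw [← h0]; exact norm_nonneg _
    · exact le_of_mul_le_mul_right key h0
  calc dist (p x) (p y) = ‖c - a‖ := by rw [dist_eq_norm, norm_sub_rev]
    _ ≤ ‖y - x‖ := hle
    _ = dist x y := by rw [dist_comm, dist_eq_norm]

noncomputable def eulerF {E : Type*} [NormedAddCommGroup E] [NormedSpace ℝ E]
    (Δ : ℝ) (b : E → E) (σ : E → (E ≃L[ℝ] E)) (Pr : ℝ → E → E) (t : ℕ → ℝ) (x₀ : E) :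
    ℕ → (ℕ → E) → E
  | 0, _ => x₀
  | (j+1), v =>
      Pr (t (j+1)) (eulerF Δ b σ Pr t x₀ j v + Δ • b (eulerF Δ b σ Pr t x₀ j v)
        + σ (eulerF Δ b σ Pr t x₀ j v) (v j))

lemma eulerF_congr {E : Type*} [NormedAddCommGroup E] [NormedSpace ℝ E]
    (Δ : ℝ) (b : E → E) (σ : E → (E ≃L[ℝ] E)) (Pr : ℝ → E → E) (t : ℕ → ℝ) (x₀ : E) :
    ∀ j (v w : ℕ → E), (∀ i < j, v i = w i) →
      eulerF Δ b σ Pr t x₀ j v = eulerF Δ b σ Pr t x₀ j w := by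
  intro j
  induction j with
  | zero => intro v w _; rfl
  | succ j ih =>
    intro v w h
    have h1 : eulerF Δ b σ Pr t x₀ j v = eulerF Δ b σ Pr t x₀ j w :=
      ih v w fun i hi => h i (hi.trans (Nat.lt_succ_self j))
    have h2 : v j = w j := h j (Nat.lt_succ_self j)
    simp only [eulerF, h1, h2]

lemma eulerF_continuous {E : Type*} [NormedAddCommGroup E] [NormedSpace ℝ E]
    (Δ : ℝ) (b : E → E) (σ : E → (E ≃L[ℝ] E)) (Pr : ℝ → E → E) (t : ℕ → ℝ) (x₀ : E)
    (hb : Continuous b) (hσ : Continuous fun v => (σ v : E →L[ℝ] E))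
    (hPr : ∀ s, Continuous (Pr s)) (j : ℕ) :
    Continuous (eulerF Δ b σ Pr t x₀ j) := by
  induction j with
  | zero => exact continuous_const
  | succ j ih =>
    refine (hPr _).comp ?_
    refine (ih.add ((hb.comp ih).const_smul Δ)).add ?_
    exact isBoundedBilinearMap_apply.continuous.comp ((hσ.comp ih).prodMk (continuous_apply j))

lemma gaussian_ball_pos {Ω : Type*} [MeasurableSpace Ω] (P : Measure Ω) [IsProbabilityMeasure P]
    (m : ℕ) (vr : NNReal) (hvr : vr ≠ 0)
    (Z : ℕ → Ω → EuclideanSpace ℝ (Fin m)) (hZm : ∀ j, Measurable (Z j))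
    (hZindep : iIndepFun
      (fun (p : ℕ × Fin m) ω => Z p.1 ω p.2) P)
    (hZlaw : ∀ j k, P.map (fun ω => Z j ω k) = gaussianReal 0 vr)
    (j : ℕ) (z₀ : EuclideanSpace ℝ (Fin m)) (r : ℝ) (hr : 0 < r) :
    0 < P ((Z j) ⁻¹' closedBall z₀ r) := by
  set s : ℝ := r / (m + 1) with hs
  have hspos : 0 < s := div_pos hr (by positivity)
  -- the box event
  set sets : ℕ × Fin m → Set ℝ := fun p => Set.Icc (z₀ p.2 - s) (z₀ p.2 + s) with hsets
  set S : Finset (ℕ × Fin m) := {j} ×ˢ Finset.univ with hS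
  have hmeas : ∀ p : ℕ × Fin m, p ∈ S → MeasurableSet (sets p) := fun p _ => measurableSet_Icc
  have hprod := hZindep.measure_inter_preimage_eq_mul S hmeas
  have hfac : ∀ p : ℕ × Fin m, 0 < P ((fun ω => Z p.1 ω p.2) ⁻¹' sets p) := by
    intro p
    have hmap : P ((fun ω => Z p.1 ω p.2) ⁻¹' sets p)
        = (P.map (fun ω => Z p.1 ω p.2)) (sets p) := by
      exact (Measure.map_apply (f := fun ω => Z p.1 ω p.2)
        (by exact (measurable_pi_apply p.2).comp ((WithLp.measurable_ofLp _ _).comp (hZm p.1))) measurableSet_Icc).symm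
    rw [hmap, hZlaw p.1 p.2]
    rw [pos_iff_ne_zero]
    intro h0
    have := (gaussianReal_absolutelyContinuous' 0 hvr) h0
    have hvol : volume (sets p) ≠ 0 := by
      simp only [hsets, Real.volume_Icc]
      intro hc
      rw [ENNReal.ofReal_eq_zero] at hc
      nlinarith
    exact hvol this
  have hboxpos : 0 < P (⋂ p ∈ S, (fun ω => Z p.1 ω p.2) ⁻¹' sets p) := by
    rw [hprod]
    exact pos_iff_ne_zero.mpr (Finset.prod_ne_zero_iff.mpr fun p _ => (hfac p).ne')
  refine lt_of_lt_of_le hboxpos (measure_mono ?_)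
  intro ω hω
  simp only [Set.mem_iInter, Set.mem_preimage] at hω
  have hcoord : ∀ k : Fin m, |Z j ω k - z₀ k| ≤ s := by
    intro k
    have := hω (j, k) (by simp [hS])
    simp only [hsets, Set.mem_Icc] at this
    rw [abs_le]
    constructor <;> linarith [this.1, this.2]
  simp only [Set.mem_preimage, mem_closedBall]
  rw [EuclideanSpace.dist_eq]
  have hsum : (∑ i, dist (Z j ω i) (z₀ i) ^ 2) ≤ m * s ^ 2 := by
    calc (∑ i, dist (Z j ω i) (z₀ i) ^ 2) ≤ ∑ _i : Fin m, s ^ 2 := by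
          refine Finset.sum_le_sum fun i _ => ?_
          have : dist (Z j ω i) (z₀ i) ≤ s := by
            rw [Real.dist_eq]; exact hcoord i
          exact pow_le_pow_left₀ dist_nonneg this 2
      _ = m * s ^ 2 := by simp [Finset.sum_const, mul_comm]
  refine Real.sqrt_le_sqrt hsum |>.trans ?_
  rw [show (m : ℝ) * s ^ 2 = ((Real.sqrt ((m:ℝ)) * s)) ^ 2 by
    rw [mul_pow, Real.sq_sqrt (Nat.cast_nonneg m)]]
  rw [Real.sqrt_sq (by positivity)]
  have : Real.sqrt (m : ℝ) ≤ m + 1 := by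
    have h1 : Real.sqrt (m : ℝ) ≤ Real.sqrt (((m : ℝ) + 1) ^ 2) :=
      Real.sqrt_le_sqrt (by nlinarith [Nat.cast_nonneg (α := ℝ) m])
    rwa [Real.sqrt_sq (by positivity)] at h1
  calc Real.sqrt (m:ℝ) * s ≤ (m + 1) * s := by nlinarith [hspos]
    _ = r := by rw [hs]; field_simp
/-- Reflected Euler scheme in `ℝ^m`:
`X̄_{j+1} = Π_{C(t_{j+1})}(X̄_j + b(X̄_j)Δ_n + σ(X̄_j)(W_{t_{j+1}} − W_{t_j}))`, `X̄_0 = x₀ ∈ C(0)`,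
with `b : ℝ^m → ℝ^m` and `σ : ℝ^m → GL_m(ℝ)` Lipschitz, `W` an `m`-dimensional Brownian
motion (the increments `Z_j = W_{t_{j+1}} − W_{t_j}` have independent `N(0,T/n)` coordinates,
independent across steps), and `C(t)` convex bodies with `C(t) ⊆ C(s)` for `t ≥ s`.
With `H_j = X̄_{j−1} + b(X̄_{j−1})Δ_n + σ(X̄_{j−1})Z_{j-1}`, for every `j ∈ {1,…,n}`,
`x ∈ int(C(t_j))` and `ε > 0`, one has `P(H_j ∈ B̄(x,ε) ∩ int(C(t_j))) > 0`. -/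
theorem stmt14 {Ω : Type*} [MeasurableSpace Ω] (P : Measure Ω) [IsProbabilityMeasure P]
    (m : ℕ) (T : ℝ) (hT : 0 < T) (n : ℕ) (hn : 0 < n)
    (t : ℕ → ℝ) (ht : ∀ j, t j = j * (T / n))
    (C : ℝ → Set (EuclideanSpace ℝ (Fin m)))
    (hCcompact : ∀ s, IsCompact (C s)) (hCconvex : ∀ s, Convex ℝ (C s))
    (hCint : ∀ s, (interior (C s)).Nonempty)
    (hCdecr : ∀ s t', s ≤ t' → C t' ⊆ C s)
    (b : EuclideanSpace ℝ (Fin m) → EuclideanSpace ℝ (Fin m))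
    (σ : EuclideanSpace ℝ (Fin m) →
      (EuclideanSpace ℝ (Fin m) ≃L[ℝ] EuclideanSpace ℝ (Fin m)))
    (Kb Kσ : NNReal) (hb : LipschitzWith Kb b)
    (hσ : LipschitzWith Kσ fun v =>
      (σ v : EuclideanSpace ℝ (Fin m) →L[ℝ] EuclideanSpace ℝ (Fin m)))
    -- `Pr s` is the metric projection onto the convex body `C s`
    (Pr : ℝ → EuclideanSpace ℝ (Fin m) → EuclideanSpace ℝ (Fin m))
    (hPr : ∀ s x, Pr s x ∈ C s ∧ ∀ y ∈ C s, dist x (Pr s x) ≤ dist x y)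
    (x₀ : EuclideanSpace ℝ (Fin m)) (hx₀ : x₀ ∈ C 0)
    -- the Brownian increments `Z_j = W_{t_{j+1}} − W_{t_j}`
    (Z : ℕ → Ω → EuclideanSpace ℝ (Fin m)) (hZm : ∀ j, Measurable (Z j))
    (hZindep : iIndepFun
      (fun (p : ℕ × Fin m) ω => Z p.1 ω p.2) P)
    (hZlaw : ∀ j k, P.map (fun ω => Z j ω k) = gaussianReal 0 (T / n).toNNReal)
    -- the reflected Euler scheme
    (Xb : ℕ → Ω → EuclideanSpace ℝ (Fin m)) (hXb0 : ∀ ω, Xb 0 ω = x₀)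
    (hXbrec : ∀ j ω, Xb (j + 1) ω =
      Pr (t (j + 1)) (Xb j ω + (T / n) • b (Xb j ω) + σ (Xb j ω) (Z j ω))) :
    ∀ j, 1 ≤ j → j ≤ n →
      ∀ x ∈ interior (C (t j)), ∀ ε > (0:ℝ),
        0 < P {ω | Xb (j - 1) ω + (T / n) • b (Xb (j - 1) ω) + σ (Xb (j - 1) ω) (Z (j - 1) ω)
          ∈ closedBall x ε ∩ interior (C (t j))} := by
  classical
  set Δn : ℝ := T / n with hΔn
  have hΔ : 0 < Δn := div_pos hT (Nat.cast_pos.mpr hn)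
  have hvr : (Δn.toNNReal : NNReal) ≠ 0 := (Real.toNNReal_pos.mpr hΔ).ne'
  have hPrCont : ∀ s, Continuous (Pr s) :=
    fun s => (proj_lipschitz (hCconvex s) (Pr s) (hPr s)).continuous
  have hPrfix : ∀ s y, y ∈ C s → Pr s y = y := by
    intro s y hy
    have h := (hPr s y).2 y hy
    rw [dist_self] at h
    have h0 := le_antisymm h dist_nonneg
    rw [dist_eq_zero] at h0
    exact h0.symm
  have hσcont : Continuous fun v : EuclideanSpace ℝ (Fin m) =>
      (σ v : EuclideanSpace ℝ (Fin m) →L[ℝ] EuclideanSpace ℝ (Fin m)) := hσ.continuous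
  have happly : Continuous fun p : EuclideanSpace ℝ (Fin m) × EuclideanSpace ℝ (Fin m) =>
      σ p.1 p.2 := by
    have h1 : Continuous fun p : EuclideanSpace ℝ (Fin m) × EuclideanSpace ℝ (Fin m) =>
        ((σ p.1 : EuclideanSpace ℝ (Fin m) →L[ℝ] EuclideanSpace ℝ (Fin m)), p.2) :=
      (hσcont.comp continuous_fst).prodMk continuous_snd
    exact isBoundedBilinearMap_apply.continuous.comp h1
  have hXF : ∀ (jj : ℕ) (ω : Ω), Xb jj ω = eulerF Δn b σ Pr t x₀ jj (fun i => Z i ω) := by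
    intro jj
    induction jj with
    | zero => intro ω; simpa [eulerF] using hXb0 ω
    | succ k ihk => intro ω; rw [hXbrec k ω, ihk ω]; simp [eulerF]
  have hloc : ∀ (xx y₀ : EuclideanSpace ℝ (Fin m)), ∀ ε' > (0:ℝ), ∃ δ > (0:ℝ),
      ∀ y z, dist y y₀ ≤ δ → dist z ((σ y₀).symm (xx - y₀ - Δn • b y₀)) ≤ δ →
      y + Δn • b y + σ y z ∈ ball xx ε' := by
    intro xx y₀ ε' hε'
    set z₀ := (σ y₀).symm (xx - y₀ - Δn • b y₀) with hz₀
    have hΨc : Continuous (fun p : EuclideanSpace ℝ (Fin m) × EuclideanSpace ℝ (Fin m) =>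
        p.1 + Δn • b p.1 + σ p.1 p.2) := by
      have h1 : Continuous fun p : EuclideanSpace ℝ (Fin m) × EuclideanSpace ℝ (Fin m) =>
          p.1 + Δn • b p.1 :=
        continuous_fst.add ((hb.continuous.comp continuous_fst).const_smul Δn)
      exact h1.add happly
    have hval : y₀ + Δn • b y₀ + σ y₀ z₀ = xx := by
      rw [hz₀, ContinuousLinearEquiv.apply_symm_apply]; abel
    have hopen : IsOpen ((fun p : EuclideanSpace ℝ (Fin m) × EuclideanSpace ℝ (Fin m) =>
        p.1 + Δn • b p.1 + σ p.1 p.2) ⁻¹' ball xx ε') := isOpen_ball.preimage hΨc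
    have hmem : ((y₀, z₀) : EuclideanSpace ℝ (Fin m) × EuclideanSpace ℝ (Fin m)) ∈
        ((fun p : EuclideanSpace ℝ (Fin m) × EuclideanSpace ℝ (Fin m) =>
          p.1 + Δn • b p.1 + σ p.1 p.2) ⁻¹' ball xx ε') := by
      simp only [Set.mem_preimage, mem_ball, hval, dist_self]
      exact hε'
    obtain ⟨ρ, hρ, hball⟩ := Metric.isOpen_iff.mp hopen _ hmem
    refine ⟨ρ/2, by positivity, fun y z hy hz => ?_⟩
    have hmem2 : ((y, z) : EuclideanSpace ℝ (Fin m) × EuclideanSpace ℝ (Fin m)) ∈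
        ball ((y₀, z₀) : EuclideanSpace ℝ (Fin m) × EuclideanSpace ℝ (Fin m)) ρ := by
      rw [mem_ball, Prod.dist_eq]
      exact max_lt (lt_of_le_of_lt hy (by linarith)) (lt_of_le_of_lt hz (by linarith))
    have h3 := hball hmem2
    simpa only [Set.mem_preimage] using h3
  intro j hj1 hjn
  clear hjn
  induction j, hj1 using Nat.le_induction with
  | base =>
    intro x hx ε hε
    obtain ⟨ε₂, hε₂, hsubint⟩ := Metric.isOpen_iff.mp isOpen_interior x hx
    have hε' : 0 < min ε ε₂ := lt_min hε hε₂
    obtain ⟨δ, hδ, hδloc⟩ := hloc x x₀ (min ε ε₂) hε'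
    have hsub : (Z 0) ⁻¹' closedBall ((σ x₀).symm (x - x₀ - Δn • b x₀)) δ ⊆
        {ω | Xb (1 - 1) ω + Δn • b (Xb (1 - 1) ω) + σ (Xb (1 - 1) ω) (Z (1 - 1) ω)
          ∈ closedBall x ε ∩ interior (C (t 1))} := by
      intro ω hω
      simp only [Set.mem_preimage, mem_closedBall] at hω
      have h1 : (1 : ℕ) - 1 = 0 := rfl
      simp only [h1, Set.mem_setOf_eq, hXb0 ω]
      have hb2 := hδloc x₀ (Z 0 ω) (by simp [hδ.le]) hω
      exact ⟨ball_subset_closedBall (ball_subset_ball (min_le_left _ _) hb2),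
        hsubint (ball_subset_ball (min_le_right _ _) hb2)⟩
    refine lt_of_lt_of_le ?_ (measure_mono hsub)
    exact gaussian_ball_pos P m Δn.toNNReal hvr Z hZm hZindep hZlaw 0 _ δ hδ
  | succ j hj ih =>
    intro x hx ε hε
    obtain ⟨ε₂, hε₂, hsubint⟩ := Metric.isOpen_iff.mp isOpen_interior x hx
    have hε' : 0 < min ε ε₂ := lt_min hε hε₂
    obtain ⟨δ, hδ, hδloc⟩ := hloc x x (min ε ε₂) hε'
    set z₀ := (σ x).symm (x - x - Δn • b x) with hz₀
    have htmono : t j ≤ t (j + 1) := by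
      rw [ht, ht, hΔn]
      have hc : (j : ℝ) ≤ ((j + 1 : ℕ) : ℝ) := by exact_mod_cast Nat.le_succ j
      exact mul_le_mul_of_nonneg_right hc hΔ.le
    have hxj : x ∈ interior (C (t j)) := interior_mono (hCdecr _ _ htmono) hx
    set A := {ω | Xb (j - 1) ω + Δn • b (Xb (j - 1) ω) + σ (Xb (j - 1) ω) (Z (j - 1) ω)
      ∈ closedBall x δ ∩ interior (C (t j))} with hAdef
    have hA : 0 < P A := ih x hxj δ hδ
    set B := (Z j) ⁻¹' closedBall z₀ δ with hBdef
    have hB : 0 < P B :=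
      gaussian_ball_pos P m Δn.toNNReal hvr Z hZm hZindep hZlaw j z₀ δ hδ
    have hsub : A ∩ B ⊆
        {ω | Xb (j + 1 - 1) ω + Δn • b (Xb (j + 1 - 1) ω)
            + σ (Xb (j + 1 - 1) ω) (Z (j + 1 - 1) ω)
          ∈ closedBall x ε ∩ interior (C (t (j + 1)))} := by
      rintro ω ⟨hωA, hωB⟩
      simp only [hAdef, Set.mem_setOf_eq] at hωA
      simp only [hBdef, Set.mem_preimage, mem_closedBall] at hωB
      have hHC : Xb (j - 1) ω + Δn • b (Xb (j - 1) ω) + σ (Xb (j - 1) ω) (Z (j - 1) ω)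
          ∈ C (t j) := interior_subset hωA.2
      have hrec := hXbrec (j - 1) ω
      rw [Nat.sub_add_cancel hj] at hrec
      have hXbj : Xb j ω = Xb (j - 1) ω + Δn • b (Xb (j - 1) ω)
          + σ (Xb (j - 1) ω) (Z (j - 1) ω) := by
        rw [hrec]
        exact hPrfix _ _ hHC
      have hdistx : dist (Xb j ω) x ≤ δ := by
        rw [hXbj]
        exact mem_closedBall.mp hωA.1
      have hball := hδloc (Xb j ω) (Z j ω) hdistx hωB
      simp only [Nat.add_sub_cancel, Set.mem_setOf_eq]
      exact ⟨ball_subset_closedBall (ball_subset_ball (min_le_left _ _) hball),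
        hsubint (ball_subset_ball (min_le_right _ _) hball)⟩
    -- Independence of `A` (a function of `Z 0, …, Z (j-1)`) and `B` (a function of `Z j`)
    have hprodAB : P (A ∩ B) = P A * P B := by
      set S : Finset (ℕ × Fin m) := Finset.range j ×ˢ Finset.univ with hSdef
      set Tf : Finset (ℕ × Fin m) := {j} ×ˢ Finset.univ with hTdef
      have hdisj : Disjoint S Tf := by
        rw [Finset.disjoint_left]
        rintro ⟨a, k⟩ hS hT
        simp only [hSdef, hTdef, Finset.mem_product, Finset.mem_range,
          Finset.mem_singleton] at hS hT
        omega
      have hfmeas : ∀ p : ℕ × Fin m, Measurable fun ω => Z p.1 ω p.2 :=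
        fun p => (measurable_pi_apply p.2).comp ((WithLp.measurable_ofLp _ _).comp (hZm p.1))
      have hbase := hZindep.indepFun_finset S Tf hdisj hfmeas
      set φ₁ : ({p // p ∈ S} → ℝ) → (Fin j → EuclideanSpace ℝ (Fin m)) :=
        fun u i => WithLp.toLp 2 (fun k => u ⟨((i : ℕ), k), Finset.mem_product.mpr
          ⟨Finset.mem_range.mpr i.isLt, Finset.mem_univ k⟩⟩) with hφ₁def
      set φ₂ : ({p // p ∈ Tf} → ℝ) → EuclideanSpace ℝ (Fin m) :=
        fun u => WithLp.toLp 2 (fun k => u ⟨(j, k), Finset.mem_product.mpr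
          ⟨Finset.mem_singleton_self j, Finset.mem_univ k⟩⟩) with hφ₂def
      have hφ₁m : Measurable φ₁ :=
        measurable_pi_lambda _ fun i => (WithLp.measurable_toLp _ _).comp (measurable_pi_lambda _ fun k => measurable_pi_apply _)
      have hφ₂m : Measurable φ₂ := (WithLp.measurable_toLp _ _).comp (measurable_pi_lambda _ fun k => measurable_pi_apply _)
      have hIndep : IndepFun (fun ω (i : Fin j) => Z i ω) (Z j) P := hbase.comp hφ₁m hφ₂m
      set Φ : (Fin j → EuclideanSpace ℝ (Fin m)) → (ℕ → EuclideanSpace ℝ (Fin m)) :=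
        fun u i => if h : i < j then u ⟨i, h⟩ else 0 with hΦdef
      have hΦc : Continuous Φ := by
        refine continuous_pi fun i => ?_
        by_cases h : i < j
        · simp only [hΦdef, dif_pos h]; exact continuous_apply _
        · simp only [hΦdef, dif_neg h]; exact continuous_const
      set G : (Fin j → EuclideanSpace ℝ (Fin m)) → EuclideanSpace ℝ (Fin m) :=
        fun u => eulerF Δn b σ Pr t x₀ (j-1) (Φ u)
          + Δn • b (eulerF Δn b σ Pr t x₀ (j-1) (Φ u))
          + σ (eulerF Δn b σ Pr t x₀ (j-1) (Φ u)) (Φ u (j-1)) with hGdef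
      have hGc : Continuous G := by
        have hF : Continuous fun u => eulerF Δn b σ Pr t x₀ (j-1) (Φ u) :=
          (eulerF_continuous Δn b σ Pr t x₀ hb.continuous hσcont hPrCont (j-1)).comp hΦc
        have hap : Continuous fun u : Fin j → EuclideanSpace ℝ (Fin m) => Φ u (j-1) :=
          (continuous_apply (j-1)).comp hΦc
        refine (hF.add ((hb.continuous.comp hF).const_smul Δn)).add ?_
        exact happly.comp (hF.prodMk hap)
      have hGg : ∀ ω, G (fun i : Fin j => Z i ω)
          = Xb (j - 1) ω + Δn • b (Xb (j - 1) ω) + σ (Xb (j - 1) ω) (Z (j - 1) ω) := by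
        intro ω
        have hFeq : eulerF Δn b σ Pr t x₀ (j-1) (Φ (fun i : Fin j => Z i ω))
            = eulerF Δn b σ Pr t x₀ (j-1) (fun i => Z i ω) := by
          refine eulerF_congr Δn b σ Pr t x₀ (j-1) _ _ fun i hi => ?_
          have hij : i < j := lt_of_lt_of_le hi (Nat.sub_le j 1)
          simp [hΦdef, dif_pos hij]
        have hjj : j - 1 < j := Nat.sub_lt (lt_of_lt_of_le one_pos hj) one_pos
        have hv : Φ (fun i : Fin j => Z i ω) (j-1) = Z (j-1) ω := by
          simp [hΦdef, dif_pos hjj]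
        rw [hGdef]
        simp only [hFeq, hv, ← hXF (j-1) ω]
      have hAeq : A = (fun ω (i : Fin j) => Z i ω) ⁻¹'
          (G ⁻¹' (closedBall x δ ∩ interior (C (t j)))) := by
        ext ω
        simp only [hAdef, Set.mem_setOf_eq, Set.mem_preimage, hGg ω]
      have hSAmeas : MeasurableSet (G ⁻¹' (closedBall x δ ∩ interior (C (t j)))) :=
        hGc.measurable (measurableSet_closedBall.inter isOpen_interior.measurableSet)
      rw [hAeq, hBdef]
      exact hIndep.measure_inter_preimage_eq_mul _ _ hSAmeas measurableSet_closedBall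
    refine lt_of_lt_of_le ?_ (measure_mono hsub)
    rw [hprodAB]
    exact ENNReal.mul_pos hA.ne' hB.ne'
end

section
/- Consider the reflected Euler scheme in ℝ^m as above, with the multifunction C decreasing: C(t) ⊂ C(s) for t ≥ s. Let X̄^1,…,X̄^N be N independent copies of the scheme and Ĉ_{N,j} = conv{X̄_j^1,…,X̄_j^N}. Then for every j ∈ {1,…,n} and every x ∈ int(C(t_j)), d(x, Ĉ_{N,j}) → 0 in probability as N → ∞. -/
open MeasureTheory ProbabilityTheory Filter Metric
open scoped RealInnerProductSpace

/-- The metric projection onto a convex set is nonexpansive. -/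
lemma proj_nonexpansive {m : ℕ} {C : Set (EuclideanSpace ℝ (Fin m))} (hC : Convex ℝ C)
    {p : EuclideanSpace ℝ (Fin m) → EuclideanSpace ℝ (Fin m)}
    (hp : ∀ x, p x ∈ C ∧ ∀ y ∈ C, dist x (p x) ≤ dist x y)
    (x y : EuclideanSpace ℝ (Fin m)) :
    dist (p x) (p y) ≤ dist x y := by
  have key : ∀ w u, u ∈ C → ⟪w - p w, u - p w⟫ ≤ 0 := by
    intro w u hu
    set a := w - p w with ha
    set c := u - p w with hc
    have h1 : ∀ t : ℝ, 0 < t → t ≤ 1 → ⟪a, c⟫ ≤ t / 2 * ‖c‖ ^ 2 := by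
      intro t ht ht1
      have hmem : p w + t • c ∈ C := by
        have h := hC (hp w).1 hu (by linarith : (0:ℝ) ≤ 1 - t) ht.le (by ring)
        have : (1 - t) • p w + t • u = p w + t • c := by
          rw [hc]; module
        rwa [this] at h
      have hmin : ‖a‖ ≤ ‖a - t • c‖ := by
        have := (hp w).2 _ hmem
        rw [dist_eq_norm, dist_eq_norm] at this
        have heq : w - (p w + t • c) = a - t • c := by rw [ha]; abel
        rwa [heq] at this
      have hsq : ‖a‖ ^ 2 ≤ ‖a - t • c‖ ^ 2 := by
        exact pow_le_pow_left₀ (norm_nonneg _) hmin 2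
      have hexp : ‖a - t • c‖ ^ 2 = ‖a‖ ^ 2 - 2 * (t * ⟪a, c⟫) + t ^ 2 * ‖c‖ ^ 2 := by
        rw [norm_sub_sq_real, real_inner_smul_right, norm_smul, Real.norm_eq_abs,
          mul_pow, sq_abs]
      nlinarith
    by_contra hcon
    push_neg at hcon
    have hc2 : 0 < ‖c‖ ^ 2 := by
      rcases lt_or_ge 0 (‖c‖ ^ 2) with h | h
      · exact h
      · have := h1 1 one_pos le_rfl
        nlinarith
    have ht₀pos : 0 < min 1 (⟪a, c⟫ / ‖c‖ ^ 2) := lt_min one_pos (div_pos hcon hc2)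
    have h2 := h1 _ ht₀pos (min_le_left _ _)
    have hle : min 1 (⟪a, c⟫ / ‖c‖ ^ 2) ≤ ⟪a, c⟫ / ‖c‖ ^ 2 := min_le_right _ _
    have hmul : min 1 (⟪a, c⟫ / ‖c‖ ^ 2) * ‖c‖ ^ 2 ≤ ⟪a, c⟫ := by
      have := mul_le_mul_of_nonneg_right hle hc2.le
      rwa [div_mul_cancel₀ _ hc2.ne'] at this
    nlinarith
  have h1 := key x (p y) (hp y).1
  have h2 := key y (p x) (hp x).1
  rw [dist_eq_norm, dist_eq_norm]
  set d := p x - p y with hd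
  have hsplit : x - y = (x - p x) + d + (p y - y) := by rw [hd]; abel
  have expand : ⟪x - y, d⟫ = ⟪x - p x, d⟫ + ‖d‖ ^ 2 + ⟪p y - y, d⟫ := by
    rw [hsplit, inner_add_left, inner_add_left, real_inner_self_eq_norm_sq]
  have e1 : ⟪x - p x, d⟫ = -⟪x - p x, p y - p x⟫ := by
    rw [← inner_neg_right, hd, neg_sub]
  have e2 : ⟪p y - y, d⟫ = -⟪y - p y, p x - p y⟫ := by
    rw [← inner_neg_left, neg_sub, hd]
  have hlow : ‖d‖ ^ 2 ≤ ⟪x - y, d⟫ := by rw [expand, e1, e2]; linarith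
  have hcs : ⟪x - y, d⟫ ≤ ‖x - y‖ * ‖d‖ := real_inner_le_norm _ _
  rcases eq_or_lt_of_le (norm_nonneg d) with h0 | h0
  · rw [← h0]; exact norm_nonneg _
  · nlinarith

/-- The Euler scheme as a function of the noise sequence. -/
noncomputable def schemeFun {m : ℕ}
    (step : ℕ → EuclideanSpace ℝ (Fin m) → EuclideanSpace ℝ (Fin m) → EuclideanSpace ℝ (Fin m))
    (x₀ : EuclideanSpace ℝ (Fin m)) :
    (j : ℕ) → (ℕ → EuclideanSpace ℝ (Fin m)) → EuclideanSpace ℝ (Fin m)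
  | 0, _ => x₀
  | j + 1, z => step j (schemeFun step x₀ j z) (z j)

lemma schemeFun_congr {m : ℕ}
    {step : ℕ → EuclideanSpace ℝ (Fin m) → EuclideanSpace ℝ (Fin m) → EuclideanSpace ℝ (Fin m)}
    {x₀ : EuclideanSpace ℝ (Fin m)} :
    ∀ (j : ℕ) {z z' : ℕ → EuclideanSpace ℝ (Fin m)}, (∀ k < j, z k = z' k) →
      schemeFun step x₀ j z = schemeFun step x₀ j z'
  | 0, _, _, _ => rfl
  | j + 1, z, z', h => by
    simp only [schemeFun]
    rw [schemeFun_congr j fun k hk => h k (Nat.lt_succ_of_lt hk), h j (Nat.lt_succ_self j)]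

lemma schemeFun_continuous {m : ℕ}
    {step : ℕ → EuclideanSpace ℝ (Fin m) → EuclideanSpace ℝ (Fin m) → EuclideanSpace ℝ (Fin m)}
    {x₀ : EuclideanSpace ℝ (Fin m)}
    (hstep : ∀ k, Continuous fun p : EuclideanSpace ℝ (Fin m) × EuclideanSpace ℝ (Fin m) =>
      step k p.1 p.2) :
    ∀ j, Continuous (schemeFun step x₀ j)
  | 0 => continuous_const
  | j + 1 => by
    have : (schemeFun step x₀ (j + 1)) =
        (fun p : _ × _ => step j p.1 p.2) ∘ fun z => (schemeFun step x₀ j z, z j) := rfl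
    rw [this]
    exact (hstep j).comp ((schemeFun_continuous hstep j).prodMk (continuous_apply j))

/-- Reconstruction of the noise from the joint variable over a finite index set. -/
noncomputable def recon (m : ℕ) (W : Finset (ℕ × ℕ × Fin m)) (u : W → ℝ) (i k : ℕ) :
    EuclideanSpace ℝ (Fin m) :=
  (EuclideanSpace.equiv (Fin m) ℝ).symm
    fun l => if h : (i, k, l) ∈ W then u ⟨(i, k, l), h⟩ else 0

lemma recon_apply {m : ℕ} (W : Finset (ℕ × ℕ × Fin m)) (u : W → ℝ) (i k : ℕ) (l : Fin m) :
    recon m W u i k l = if h : (i, k, l) ∈ W then u ⟨(i, k, l), h⟩ else 0 := rfl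

lemma measurable_recon {m : ℕ} (W : Finset (ℕ × ℕ × Fin m)) (i k : ℕ) :
    Measurable fun u : W → ℝ => recon m W u i k := by
  refine ((EuclideanSpace.equiv (Fin m) ℝ).symm.continuous.measurable).comp ?_
  refine measurable_pi_lambda _ fun l => ?_
  by_cases h : (i, k, l) ∈ W
  · simpa only [dif_pos h] using measurable_pi_apply _
  · simpa only [dif_neg h] using measurable_const


/-- Reflected Euler scheme in `ℝ^m`:
`X̄_{j+1} = Π_{C(t_{j+1})}(X̄_j + b(X̄_j)Δ_n + σ(X̄_j)(W_{t_{j+1}} − W_{t_j}))`, `X̄_0 = x₀ ∈ C(0)`,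
with `b, σ` Lipschitz, `σ` taking values in `GL_m(ℝ)`, and the convex bodies `C(t)`
decreasing (`C(t) ⊆ C(s)` for `t ≥ s`). Let `X̄^1, X̄^2, …` be independent copies of the
scheme and `Ĉ_{N,j} = conv{X̄_j^1,…,X̄_j^N}`. Then for every `j ∈ {1,…,n}` and every
`x ∈ int(C(t_j))`, `d(x, Ĉ_{N,j}) → 0` in probability as `N → ∞`. -/
theorem stmt15 {Ω : Type*} [MeasurableSpace Ω] (P : Measure Ω) [IsProbabilityMeasure P]
    (m : ℕ) (T : ℝ) (hT : 0 < T) (n : ℕ) (hn : 0 < n)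
    (t : ℕ → ℝ) (ht : ∀ j, t j = j * (T / n))
    (C : ℝ → Set (EuclideanSpace ℝ (Fin m)))
    (hCcompact : ∀ s, IsCompact (C s)) (hCconvex : ∀ s, Convex ℝ (C s))
    (hCint : ∀ s, (interior (C s)).Nonempty)
    (hCdecr : ∀ s t', s ≤ t' → C t' ⊆ C s)
    (b : EuclideanSpace ℝ (Fin m) → EuclideanSpace ℝ (Fin m))
    (σ : EuclideanSpace ℝ (Fin m) →
      (EuclideanSpace ℝ (Fin m) ≃L[ℝ] EuclideanSpace ℝ (Fin m)))
    (Kb Kσ : NNReal) (hb : LipschitzWith Kb b)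
    (hσ : LipschitzWith Kσ fun v =>
      (σ v : EuclideanSpace ℝ (Fin m) →L[ℝ] EuclideanSpace ℝ (Fin m)))
    -- `Pr s` is the metric projection onto the convex body `C s`
    (Pr : ℝ → EuclideanSpace ℝ (Fin m) → EuclideanSpace ℝ (Fin m))
    (hPr : ∀ s x, Pr s x ∈ C s ∧ ∀ y ∈ C s, dist x (Pr s x) ≤ dist x y)
    (x₀ : EuclideanSpace ℝ (Fin m)) (hx₀ : x₀ ∈ C 0)
    -- the Brownian increments of the independent copies of the scheme:
    -- `Z i j = W^i_{t_{j+1}} − W^i_{t_j}` for copy `i`, all coordinates of all increments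
    -- of all copies being i.i.d. `N(0,T/n)` Gaussian random variables
    (Z : ℕ → ℕ → Ω → EuclideanSpace ℝ (Fin m)) (hZm : ∀ i j, Measurable (Z i j))
    (hZindep : iIndepFun
      (fun (p : ℕ × ℕ × Fin m) ω => Z p.1 p.2.1 ω p.2.2) P)
    (hZlaw : ∀ i j k, P.map (fun ω => Z i j ω k) = gaussianReal 0 (T / n).toNNReal)
    -- the independent copies of the reflected Euler scheme
    (Xb : ℕ → ℕ → Ω → EuclideanSpace ℝ (Fin m)) (hXb0 : ∀ i ω, Xb i 0 ω = x₀)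
    (hXbrec : ∀ i j ω, Xb i (j + 1) ω =
      Pr (t (j + 1)) (Xb i j ω + (T / n) • b (Xb i j ω) + σ (Xb i j ω) (Z i j ω))) :
    ∀ j, 1 ≤ j → j ≤ n →
      ∀ x ∈ interior (C (t j)), ∀ ε > (0:ℝ),
        Tendsto
          (fun N : ℕ =>
            P {ω | ε < infDist x (convexHull ℝ ((fun i => Xb i j ω) '' Set.Iio (N + 1)))})
          atTop (nhds 0) := by
  intro j hj1 hjn x hx ε hε
  classical
  have hTn : (0:ℝ) < T / n := div_pos hT (by exact_mod_cast hn)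
  have hv : ((T / n).toNNReal) ≠ 0 := by
    simp only [Ne, Real.toNNReal_eq_zero, not_le]
    exact hTn
  have htmono : ∀ a b : ℕ, a ≤ b → t a ≤ t b := by
    intro a b hab
    rw [ht, ht]
    exact mul_le_mul_of_nonneg_right (by exact_mod_cast hab) hTn.le
  have hfix : ∀ s y, y ∈ C s → Pr s y = y := by
    intro s y hy
    have h := (hPr s y).2 y hy
    rw [dist_self] at h
    exact (dist_le_zero.mp h).symm
  set step : ℕ → EuclideanSpace ℝ (Fin m) → EuclideanSpace ℝ (Fin m) →
      EuclideanSpace ℝ (Fin m) :=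
    fun k v w => Pr (t (k + 1)) (v + (T / n) • b v + σ v w) with hstepdef
  set F := schemeFun step x₀ with hFdef
  have hstepcont : ∀ k, Continuous fun p :
      EuclideanSpace ℝ (Fin m) × EuclideanSpace ℝ (Fin m) => step k p.1 p.2 := by
    intro k
    have hPrc : Continuous (Pr (t (k + 1))) := by
      refine LipschitzWith.continuous (K := 1) ?_
      refine LipschitzWith.of_dist_le_mul fun a c => ?_
      simpa using proj_nonexpansive (hCconvex _) (hPr _) a c
    refine hPrc.comp ?_
    refine (continuous_fst.add (((hb.continuous).comp continuous_fst).const_smul (T / n))).add ?_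
    exact isBoundedBilinearMap_apply.continuous.comp
      (((hσ.continuous).comp continuous_fst).prodMk continuous_snd)
  have hFcont : Continuous (F j) := schemeFun_continuous hstepcont j
  have hXbF : ∀ i jj ω, Xb i jj ω = F jj (fun k => Z i k ω) := by
    intro i jj ω
    induction jj with
    | zero => rw [hXb0]; rfl
    | succ k ih => rw [hXbrec, ih]; rfl
  have hXbm : ∀ i, Measurable fun ω => Xb i j ω := by
    intro i
    have heq : (fun ω => Xb i j ω) = fun ω => F j (fun k => Z i k ω) :=
      funext fun ω => hXbF i j ω
    rw [heq]
    exact hFcont.measurable.comp (measurable_pi_lambda _ fun k => hZm i k)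
  have hxC : x ∈ C (t j) := interior_subset hx
  -- reachability of `x` by the scheme
  have hreach : ∃ z : ℕ → EuclideanSpace ℝ (Fin m), F j z = x := by
    set s : ℕ → EuclideanSpace ℝ (Fin m) := fun k => if k = 0 then x₀ else x with hs
    set z : ℕ → EuclideanSpace ℝ (Fin m) :=
      fun k => (σ (s k)).symm (x - s k - (T / n) • b (s k)) with hz
    have hstep_s : ∀ k, k + 1 ≤ j → step k (s k) (z k) = x := by
      intro k hk
      have hxk : x ∈ C (t (k + 1)) := hCdecr _ _ (htmono _ _ hk) hxC
      have hlin : s k + (T / n) • b (s k) + σ (s k) (z k) = x := by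
        rw [hz]
        simp only []
        rw [ContinuousLinearEquiv.apply_symm_apply]
        abel
      show Pr (t (k + 1)) (s k + (T / n) • b (s k) + σ (s k) (z k)) = x
      rw [hlin]
      exact hfix _ _ hxk
    have hFs : ∀ k, k ≤ j → F k z = s k := by
      intro k hk
      induction k with
      | zero => simp [hFdef, schemeFun, hs]
      | succ k ih =>
        have h1 : F (k + 1) z = step k (F k z) (z k) := rfl
        rw [h1, ih (by omega), hstep_s k hk]
        simp [hs]
    refine ⟨z, ?_⟩
    rw [hFs j le_rfl, hs]
    simp [Nat.one_le_iff_ne_zero.mp hj1]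
  obtain ⟨zstar, hzstar⟩ := hreach
  have hUopen : IsOpen (F j ⁻¹' ball x ε) := hFcont.isOpen_preimage _ isOpen_ball
  have hzmem : zstar ∈ F j ⁻¹' ball x ε := by
    rw [Set.mem_preimage, hzstar]
    exact mem_ball_self hε
  obtain ⟨I, u, hIu, hpi⟩ := isOpen_pi_iff.mp hUopen zstar hzmem
  have hδex : ∀ k, ∃ δ : ℝ, 0 < δ ∧ (k ∈ I → ball (zstar k) δ ⊆ u k) := by
    intro k
    by_cases hk : k ∈ I
    · obtain ⟨δ, hδpos, hδsub⟩ := Metric.isOpen_iff.mp (hIu k hk).1 (zstar k) (hIu k hk).2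
      exact ⟨δ, hδpos, fun _ => hδsub⟩
    · exact ⟨1, one_pos, fun h => absurd h hk⟩
  choose δ hδpos hδsub using hδex
  have hsm : (0:ℝ) ≤ Real.sqrt m := Real.sqrt_nonneg _
  set ρ : ℕ → ℝ := fun k => δ k / (Real.sqrt m + 1) with hρ
  have hρpos : ∀ k, 0 < ρ k := fun k => div_pos (hδpos k) (by linarith)
  set sets : ℕ × ℕ × Fin m → Set ℝ := fun p =>
    Set.Ioo (zstar p.2.1 p.2.2 - ρ p.2.1) (zstar p.2.1 p.2.2 + ρ p.2.1) with hsets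
  set gauss := gaussianReal 0 (T / n).toNNReal with hgauss
  haveI : IsProbabilityMeasure gauss := by rw [hgauss]; infer_instance
  have hmZc : ∀ i k (l : Fin m), Measurable fun ω => Z i k ω l := by
    intro i k l
    exact ((EuclideanSpace.proj (𝕜 := ℝ) l).continuous.measurable).comp (hZm i k)
  have hfactor : ∀ p : ℕ × ℕ × Fin m,
      P ((fun ω => Z p.1 p.2.1 ω p.2.2) ⁻¹' sets p) = gauss (sets p) := by
    intro p
    rw [← hZlaw p.1 p.2.1 p.2.2, Measure.map_apply (hmZc _ _ _) measurableSet_Ioo]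
  have hgpos : ∀ p : ℕ × ℕ × Fin m, 0 < gauss (sets p) := by
    intro p
    rw [pos_iff_ne_zero]
    intro h0
    have hvol := (gaussianReal_absolutelyContinuous' 0 hv) h0
    rw [hsets] at hvol
    simp only [Real.volume_Ioo] at hvol
    have hpos : (0:ℝ) < zstar p.2.1 p.2.2 + ρ p.2.1 - (zstar p.2.1 p.2.2 - ρ p.2.1) := by
      have := hρpos p.2.1; linarith
    exact (ENNReal.ofReal_pos.mpr hpos).ne' hvol
  set Q : Finset (ℕ × Fin m) := I ×ˢ Finset.univ with hQdef
  set c₀ : ENNReal := ∏ q ∈ Q, gauss (sets (0, q)) with hc₀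
  have hc₀pos : 0 < c₀ := CanonicallyOrderedAdd.prod_pos.mpr fun q _ => hgpos _
  -- hitting probability lower bound
  have hball : ∀ i : ℕ, c₀ ≤ P ((fun ω => Xb i j ω) ⁻¹' ball x ε) := by
    intro i
    have hprod := hZindep.measure_inter_preimage_eq_mul (sets := sets)
      ({i} ×ˢ Q) (fun p _ => measurableSet_Ioo)
    have hsub : (⋂ p ∈ ({i} ×ˢ Q : Finset (ℕ × ℕ × Fin m)),
        (fun ω => Z p.1 p.2.1 ω p.2.2) ⁻¹' sets p)
        ⊆ (fun ω => Xb i j ω) ⁻¹' ball x ε := by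
      intro ω hω
      simp only [Set.mem_iInter] at hω
      have hZmem : ∀ k ∈ I, Z i k ω ∈ u k := by
        intro k hk
        apply hδsub k hk
        rw [mem_ball, EuclideanSpace.dist_eq]
        have hcoord : ∀ l : Fin m, dist (Z i k ω l) (zstar k l) ≤ ρ k := by
          intro l
          have hp := hω (i, k, l) (by
            simp [hQdef, Finset.mem_product, hk])
          simp only [Set.mem_preimage, hsets, Set.mem_Ioo] at hp
          rw [Real.dist_eq, abs_le]
          constructor <;> [linarith [hp.1]; linarith [hp.2]]
        have hsumle : (∑ l, dist (Z i k ω l) (zstar k l) ^ 2) ≤ (m : ℝ) * ρ k ^ 2 := by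
          calc (∑ l, dist (Z i k ω l) (zstar k l) ^ 2)
              ≤ ∑ _l : Fin m, ρ k ^ 2 :=
                Finset.sum_le_sum fun l _ => pow_le_pow_left₀ dist_nonneg (hcoord l) 2
            _ = (m : ℝ) * ρ k ^ 2 := by
                rw [Finset.sum_const, Finset.card_univ, Fintype.card_fin, nsmul_eq_mul]
        calc Real.sqrt (∑ l, dist (Z i k ω l) (zstar k l) ^ 2)
            ≤ Real.sqrt ((m : ℝ) * ρ k ^ 2) := Real.sqrt_le_sqrt hsumle
          _ = Real.sqrt m * ρ k := by
              rw [Real.sqrt_mul (Nat.cast_nonneg m), Real.sqrt_sq (hρpos k).le]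
          _ < δ k := by
              rw [hρ]
              have h1 : (0:ℝ) < Real.sqrt m + 1 := by linarith
              have h2 : Real.sqrt ↑m * (δ k / (Real.sqrt ↑m + 1))
                  = Real.sqrt ↑m * δ k / (Real.sqrt ↑m + 1) := by ring
              rw [h2, div_lt_iff₀ h1]
              nlinarith [hδpos k]
      have hmem := hpi (fun k hk => hZmem k hk)
      rw [Set.mem_preimage, hXbF i j ω]
      exact hmem
    calc c₀ = ∏ p ∈ ({i} ×ˢ Q : Finset (ℕ × ℕ × Fin m)),
          P ((fun ω => Z p.1 p.2.1 ω p.2.2) ⁻¹' sets p) := by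
          rw [Finset.prod_product, Finset.prod_singleton, hc₀]
          exact Finset.prod_congr rfl fun q _ => (hfactor (i, q)).symm
      _ = P (⋂ p ∈ ({i} ×ˢ Q : Finset (ℕ × ℕ × Fin m)),
            (fun ω => Z p.1 p.2.1 ω p.2.2) ⁻¹' sets p) := hprod.symm
      _ ≤ P ((fun ω => Xb i j ω) ⁻¹' ball x ε) := measure_mono hsub
  set B : ℕ → Set Ω := fun i => (fun ω => Xb i j ω) ⁻¹' (ball x ε)ᶜ with hB
  have hBbound : ∀ i, P (B i) ≤ 1 - c₀ := by
    intro i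
    have hmb : MeasurableSet ((fun ω => Xb i j ω) ⁻¹' ball x ε) :=
      (hXbm i) isOpen_ball.measurableSet
    rw [hB]
    simp only [Set.preimage_compl]
    rw [prob_compl_eq_one_sub hmb]
    exact tsub_le_tsub_left (hball i) 1
  -- identification of the scheme from the restricted noise
  have hrecon : ∀ (W : Finset (ℕ × ℕ × Fin m)) (i : ℕ) (ω : Ω),
      (∀ k, k < j → ∀ l : Fin m, (i, k, l) ∈ W) →
      F j (fun k => recon m W (fun p : W => Z (p : ℕ × ℕ × Fin m).1
          (p : ℕ × ℕ × Fin m).2.1 ω (p : ℕ × ℕ × Fin m).2.2) i k) = Xb i j ω := by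
    intro W i ω hc
    rw [hXbF i j ω]
    refine schemeFun_congr j fun k hk => ?_
    ext l
    rw [recon_apply, dif_pos (hc k hk l)]
  -- key induction
  have hkey : ∀ N : ℕ, P (⋂ i ∈ Finset.range (N + 1), B i) ≤ (1 - c₀) ^ (N + 1) := by
    intro N
    induction N with
    | zero => simpa using hBbound 0
    | succ N ih =>
      set S : Finset (ℕ × ℕ × Fin m) :=
        Finset.range (N + 1) ×ˢ (Finset.range j ×ˢ Finset.univ) with hS
      set Tf : Finset (ℕ × ℕ × Fin m) := {N + 1} ×ˢ (Finset.range j ×ˢ Finset.univ) with hTf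
      have hdisj : Disjoint S Tf := by
        rw [Finset.disjoint_left]
        rintro ⟨a, k, l⟩ hS' hT'
        simp only [hS, hTf, Finset.mem_product, Finset.mem_range, Finset.mem_singleton] at hS' hT'
        omega
      have hmZp : ∀ p : ℕ × ℕ × Fin m, Measurable fun ω => Z p.1 p.2.1 ω p.2.2 :=
        fun p => hmZc _ _ _
      have hIndep := hZindep.indepFun_finset S Tf hdisj hmZp
      set MS : Set (S → ℝ) := ⋂ i ∈ Finset.range (N + 1),
        (fun v : S → ℝ => F j (fun k => recon m S v i k)) ⁻¹' (ball x ε)ᶜ with hMS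
      set MT : Set (Tf → ℝ) :=
        (fun v : Tf → ℝ => F j (fun k => recon m Tf v (N + 1) k)) ⁻¹' (ball x ε)ᶜ with hMT
      have hmeasmap : ∀ (W : Finset (ℕ × ℕ × Fin m)) (i : ℕ),
          Measurable fun v : W → ℝ => F j (fun k => recon m W v i k) :=
        fun W i => hFcont.measurable.comp
          (measurable_pi_lambda _ fun k => measurable_recon W i k)
      have hMSm : MeasurableSet MS := by
        rw [hMS]
        exact MeasurableSet.biInter (Finset.range (N + 1)).countable_toSet
          fun i _ => (hmeasmap S i) isOpen_ball.measurableSet.compl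
      have hMTm : MeasurableSet MT := (hmeasmap Tf (N + 1)) isOpen_ball.measurableSet.compl
      have hmul := hIndep.measure_inter_preimage_eq_mul MS MT hMSm hMTm
      have hSmem : ∀ i' k (l : Fin m), i' < N + 1 → k < j → ((i', k, l) : ℕ × ℕ × Fin m) ∈ S := by
        intro i' k l h1 h2
        simp only [hS, Finset.mem_product, Finset.mem_range, Finset.mem_univ, and_true]
        exact ⟨h1, h2⟩
      have hTmem : ∀ k (l : Fin m), k < j → ((N + 1, k, l) : ℕ × ℕ × Fin m) ∈ Tf := by
        intro k l h2
        simp [hTf, Finset.mem_product, h2]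
      have hpreS : (fun a (p : S) => Z (p : ℕ × ℕ × Fin m).1 (p : ℕ × ℕ × Fin m).2.1 a
          (p : ℕ × ℕ × Fin m).2.2) ⁻¹' MS = ⋂ i ∈ Finset.range (N + 1), B i := by
        ext ω
        rw [hMS]
        simp only [Set.mem_preimage, Set.mem_iInter, Set.mem_compl_iff, hB]
        refine forall_congr' fun i => forall_congr' fun hi => ?_
        rw [hrecon S i ω fun k hk l => hSmem i k l (Finset.mem_range.mp hi) hk]
      have hpreT : (fun a (p : Tf) => Z (p : ℕ × ℕ × Fin m).1 (p : ℕ × ℕ × Fin m).2.1 a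
          (p : ℕ × ℕ × Fin m).2.2) ⁻¹' MT = B (N + 1) := by
        ext ω
        rw [hMT]
        simp only [Set.mem_preimage, Set.mem_compl_iff, hB]
        rw [hrecon Tf (N + 1) ω fun k hk l => hTmem k l hk]
      rw [hpreS, hpreT] at hmul
      have hstepEq : ⋂ i ∈ Finset.range (N + 2), B i
          = (⋂ i ∈ Finset.range (N + 1), B i) ∩ B (N + 1) := by
        have : Finset.range (N + 2) = insert (N + 1) (Finset.range (N + 1)) :=
          Finset.range_add_one
        rw [this, Finset.set_biInter_insert]
        exact Set.inter_comm _ _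
      rw [hstepEq, hmul]
      calc P (⋂ i ∈ Finset.range (N + 1), B i) * P (B (N + 1))
          ≤ (1 - c₀) ^ (N + 1) * (1 - c₀) := mul_le_mul' ih (hBbound (N + 1))
        _ = (1 - c₀) ^ (N + 2) := (pow_succ _ _).symm
  -- inclusion of the target event
  have hsubE : ∀ N : ℕ,
      {ω | ε < infDist x (convexHull ℝ ((fun i => Xb i j ω) '' Set.Iio (N + 1)))}
      ⊆ ⋂ i ∈ Finset.range (N + 1), B i := by
    intro N ω hω
    simp only [Set.mem_setOf_eq] at hω
    refine Set.mem_iInter₂.mpr fun i hi => ?_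
    rw [hB]
    simp only [Set.mem_preimage, Set.mem_compl_iff, mem_ball]
    intro hcon
    have hmemhull : Xb i j ω ∈ convexHull ℝ ((fun i => Xb i j ω) '' Set.Iio (N + 1)) :=
      subset_convexHull ℝ _ ⟨i, Finset.mem_range.mp hi, rfl⟩
    have hinf := infDist_le_dist_of_mem (x := x) hmemhull
    rw [dist_comm] at hcon
    linarith
  have hlt1 : 1 - c₀ < 1 := ENNReal.sub_lt_self ENNReal.one_ne_top one_ne_zero hc₀pos.ne'
  have hpow : Tendsto (fun N : ℕ => (1 - c₀) ^ (N + 1)) atTop (nhds (0 : ENNReal)) :=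
    (ENNReal.tendsto_pow_atTop_nhds_zero_of_lt_one hlt1).comp (tendsto_add_atTop_nat 1)
  exact tendsto_of_tendsto_of_tendsto_of_le_of_le tendsto_const_nhds hpow
    (fun N => zero_le) fun N => le_trans (measure_mono (hsubE N)) (hkey N)
end

section
/- Let S ∈ ℝ, let X be a random variable with values in (−∞, S] whose CDF F satisfies F(y) ≤ φ(y) for y in a left neighborhood of S, where φ is C¹ near S with φ(S) ∈ (0,1). Let X_1,…,X_N be i.i.d. copies of X and Ŝ_N = max{X_1,…,X_N}. Then for every x < 0, P(N(Ŝ_N − S) ≤ x) → 0 as N → ∞; equivalently, the CDF of N(Ŝ_N − S) converges pointwise to 1_{[0,∞)} and N(S − Ŝ_N) → 0 in probability. -/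
open MeasureTheory ProbabilityTheory Filter

/-- Let `X₀` be a random variable with values in `(−∞,S]` whose CDF `F` satisfies
`F(y) ≤ φ(y)` for `y` in a left neighborhood of `S`, where `φ` is `C¹` near `S` with
`φ(S) ∈ (0,1)`. Let `X_1, X_2, …` be i.i.d. copies of `X₀` and `Ŝ_N = max{X_1,…,X_N}`.
Then for every `x < 0`, `P(N(Ŝ_N − S) ≤ x) → 0` as `N → ∞`; equivalently the CDF of
`N(Ŝ_N − S)` converges pointwise to `1_{[0,∞)}` and `N(S − Ŝ_N) → 0` in probability. -/
theorem stmt17 {Ω : Type*} [MeasurableSpace Ω] (P : Measure Ω) [IsProbabilityMeasure P]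
    (S : ℝ) (X₀ : Ω → ℝ) (hX₀m : Measurable X₀) (hval : ∀ ω, X₀ ω ≤ S)
    (F : ℝ → ℝ) (hF : ∀ x, F x = (P {ω | X₀ ω ≤ x}).toReal)
    (φ : ℝ → ℝ) (hφC1 : ∃ δ > (0:ℝ), ContDiffOn ℝ 1 φ (Set.Icc (S - δ) S))
    (hφS : φ S ∈ Set.Ioo (0:ℝ) 1)
    (hFφ : ∃ δ > (0:ℝ), ∀ y ∈ Set.Ico (S - δ) S, F y ≤ φ y)
    (X : ℕ → Ω → ℝ) (hXm : ∀ k, Measurable (X k))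
    (hindep : iIndepFun X P)
    (hident : ∀ k, IdentDistrib (X k) X₀ P P) :
    (∀ x < (0:ℝ),
      Tendsto
        (fun N : ℕ =>
          P {ω | ((N:ℝ) + 1) *
            ((Finset.range (N + 1)).sup' Finset.nonempty_range_add_one (fun k => X k ω) - S)
            ≤ x})
        atTop (nhds 0)) ∧
    (∀ ε > (0:ℝ),
      Tendsto
        (fun N : ℕ =>
          P {ω | ε < ((N:ℝ) + 1) *
            (S - (Finset.range (N + 1)).sup' Finset.nonempty_range_add_one (fun k => X k ω))})
        atTop (nhds 0)) := by
  obtain ⟨δ₁, hδ₁, hC1⟩ := hφC1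
  obtain ⟨δ₂, hδ₂, hle⟩ := hFφ
  set δ : ℝ := min δ₁ δ₂ with hδdef
  have hδ : 0 < δ := lt_min hδ₁ hδ₂
  -- product formula
  have hprod : ∀ (N : ℕ) (t : ℝ),
      P {ω | (Finset.range (N + 1)).sup' Finset.nonempty_range_add_one (fun k => X k ω) ≤ t}
        = (P {ω | X₀ ω ≤ t}) ^ (N + 1) := by
    intro N t
    have hset : {ω | (Finset.range (N + 1)).sup' Finset.nonempty_range_add_one (fun k => X k ω) ≤ t}
        = ⋂ k ∈ Finset.range (N + 1), X k ⁻¹' Set.Iic t := by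
      ext ω
      simp [Finset.sup'_le_iff]
    rw [hset,
      hindep.measure_inter_preimage_eq_mul (sets := fun _ => Set.Iic t) (Finset.range (N+1))
        (fun i _ => measurableSet_Iic)]
    have hfac : ∀ k, P (X k ⁻¹' Set.Iic t) = P {ω | X₀ ω ≤ t} := by
      intro k
      have := (hident k).measure_mem_eq (measurableSet_Iic (a := t))
      simpa [Set.preimage, Set.Iic] using this
    simp [hfac, Finset.prod_const, Finset.card_range]
  have hofReal : ∀ t : ℝ, P {ω | X₀ ω ≤ t} = ENNReal.ofReal (F t) := by
    intro t
    rw [hF t, ENNReal.ofReal_toReal (measure_ne_top P _)]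
  -- the constant c
  set c : ℝ := (φ S + 1) / 2 with hcdef
  have hφSc : φ S < c := by have := hφS.2; simp only [hcdef]; linarith
  have hc1 : c < 1 := by have := hφS.2; simp only [hcdef]; linarith
  have hc0 : 0 ≤ c := by have := hφS.1; simp only [hcdef]; linarith
  -- main claim
  have main : ∀ x < (0:ℝ),
      Tendsto
        (fun N : ℕ =>
          P {ω | ((N:ℝ) + 1) *
            ((Finset.range (N + 1)).sup' Finset.nonempty_range_add_one (fun k => X k ω) - S)
            ≤ x})
        atTop (nhds 0) := by
    intro x hx
    set t : ℕ → ℝ := fun N => S + x / ((N:ℝ) + 1) with htdef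
    have hNpos : ∀ N : ℕ, (0:ℝ) < (N:ℝ) + 1 := fun N => by positivity
    have htlt : ∀ N, t N < S := by
      intro N
      have : x / ((N:ℝ) + 1) < 0 := div_neg_of_neg_of_pos hx (hNpos N)
      simp only [htdef]; linarith
    have hNt : Tendsto (fun N : ℕ => ((N:ℝ) + 1)) atTop atTop :=
      tendsto_atTop_add_const_right _ 1 tendsto_natCast_atTop_atTop
    have hdiv : Tendsto (fun N : ℕ => x / ((N:ℝ) + 1)) atTop (nhds 0) :=
      tendsto_const_nhds.div_atTop hNt
    have htS : Tendsto t atTop (nhds S) := by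
      have := hdiv.const_add S
      simpa [htdef] using this
    have hev_mem : ∀ᶠ N : ℕ in atTop, S - δ ≤ t N := by
      have : ∀ᶠ N : ℕ in atTop, x / ((N:ℝ) + 1) > -δ :=
        hdiv.eventually (eventually_gt_nhds (by linarith))
      filter_upwards [this] with N h
      simp only [htdef]; linarith
    -- φ (t N) tends to φ S
    have hcontS : ContinuousWithinAt φ (Set.Icc (S - δ₁) S) S :=
      (hC1.continuousOn).continuousWithinAt ⟨by linarith, le_refl _⟩
    have htendφ : Tendsto (fun N => φ (t N)) atTop (nhds (φ S)) := by
      apply hcontS.tendsto.comp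
      rw [tendsto_nhdsWithin_iff]
      refine ⟨htS, ?_⟩
      filter_upwards [hev_mem] with N h
      exact ⟨by have : δ ≤ δ₁ := min_le_left _ _; linarith, (htlt N).le⟩
    have hev_le : ∀ᶠ N : ℕ in atTop, F (t N) ≤ c := by
      have h1 : ∀ᶠ N : ℕ in atTop, φ (t N) < c :=
        htendφ.eventually (eventually_lt_nhds hφSc)
      filter_upwards [h1, hev_mem] with N h h'
      have hmem : t N ∈ Set.Ico (S - δ₂) S :=
        ⟨by have : δ ≤ δ₂ := min_le_right _ _; linarith, htlt N⟩
      exact (hle _ hmem).trans h.le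
    -- rewrite the event
    have hevset : ∀ N : ℕ,
        {ω | ((N:ℝ) + 1) *
            ((Finset.range (N + 1)).sup' Finset.nonempty_range_add_one (fun k => X k ω) - S)
            ≤ x}
        = {ω | (Finset.range (N + 1)).sup' Finset.nonempty_range_add_one (fun k => X k ω) ≤ t N} := by
      intro N
      ext ω
      simp only [Set.mem_setOf_eq, htdef]
      rw [mul_comm, ← le_div_iff₀ (hNpos N)]
      constructor <;> intro h <;> linarith
    -- squeeze
    have hupper : Tendsto (fun N : ℕ => (ENNReal.ofReal c) ^ (N + 1)) atTop (nhds 0) := by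
      have h1 : (ENNReal.ofReal c) < 1 := by
        rw [← ENNReal.ofReal_one]
        exact ENNReal.ofReal_lt_ofReal_iff_of_nonneg hc0 |>.mpr hc1
      exact (ENNReal.tendsto_pow_atTop_nhds_zero_of_lt_one h1).comp (tendsto_add_atTop_nat 1)
    refine tendsto_of_tendsto_of_tendsto_of_le_of_le' tendsto_const_nhds hupper
      (Eventually.of_forall fun N => zero_le) ?_
    filter_upwards [hev_le] with N h
    rw [hevset N, hprod N (t N), hofReal (t N)]
    exact pow_le_pow_left' (ENNReal.ofReal_le_ofReal h) _
  refine ⟨main, ?_⟩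
  intro ε hε
  have hsub : ∀ N : ℕ,
      {ω | ε < ((N:ℝ) + 1) *
        (S - (Finset.range (N + 1)).sup' Finset.nonempty_range_add_one (fun k => X k ω))}
      ⊆ {ω | ((N:ℝ) + 1) *
        ((Finset.range (N + 1)).sup' Finset.nonempty_range_add_one (fun k => X k ω) - S) ≤ -ε} := by
    intro N ω h
    simp only [Set.mem_setOf_eq] at h ⊢
    nlinarith [h]
  refine tendsto_of_tendsto_of_tendsto_of_le_of_le' tendsto_const_nhds
    (main (-ε) (by linarith)) (Eventually.of_forall fun N => zero_le)
    (Eventually.of_forall fun N => measure_mono (hsub N))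
end
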